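/- arXiv:math/0504391 — 2 statements merged into one kernel-verified Lean document; each statement's English description precedes it below -/
import Mathlib

section
/- Let d ≥ 1, p ∈ (1,2], m ∈ ℝ, and let α : ℝ^d → ℝ be locally Hölder continuous with α(x) ≥ c(1+|x|)^{m−2} for all x and some c > 0. Then the only function u : ℝ^d × [0,∞) → ℝ that is continuous, nonnegative, twice continuously differentiable in x and once in t on ℝ^d × (0,∞), satisfies ∂u/∂t = (1+|x|)^m Δu − α(x)u^p on ℝ^d × (0,∞), and satisfies u(x,0) = 0 for all x ∈ ℝ^d, is u ≡ 0. -/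
open Set Filter Topology

/-- The `i`-th partial derivative of a function on `ℝ^d`. -/
noncomputable def pd {d : ℕ} (i : Fin d) (f : EuclideanSpace ℝ (Fin d) → ℝ)
    (x : EuclideanSpace ℝ (Fin d)) : ℝ :=
  fderiv ℝ f x (EuclideanSpace.single i 1)

/-- `f` is locally Hölder continuous. -/
def LocHolder {d : ℕ} (f : EuclideanSpace ℝ (Fin d) → ℝ) : Prop :=
  ∀ K : Set (EuclideanSpace ℝ (Fin d)), IsCompact K →
    ∃ κ C : ℝ, 0 < κ ∧ κ ≤ 1 ∧ 0 ≤ C ∧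
      ∀ x ∈ K, ∀ y ∈ K, |f x - f y| ≤ C * ‖x - y‖ ^ κ

lemma deriv_nonneg_of_isMaxOn {f : ℝ → ℝ} {t₀ T : ℝ} (ht0 : 0 < t₀) (htT : t₀ ≤ T)
    (hdiff : DifferentiableAt ℝ f t₀) (hmax : ∀ s ∈ Icc (0:ℝ) T, f s ≤ f t₀) :
    0 ≤ deriv f t₀ := by
  have hs : Tendsto (slope f t₀) (𝓝[<] t₀) (𝓝 (deriv f t₀)) :=
    (hasDerivAt_iff_tendsto_slope.1 hdiff.hasDerivAt).mono_left
      (nhdsWithin_mono _ (fun x hx => ne_of_lt hx))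
  have hev : ∀ᶠ s in 𝓝[<] t₀, 0 ≤ slope f t₀ s := by
    filter_upwards [Ioo_mem_nhdsLT ht0] with s hs'
    have h1 : f s ≤ f t₀ := hmax s ⟨le_of_lt hs'.1, le_trans (le_of_lt hs'.2) htT⟩
    have h2 : s - t₀ < 0 := sub_neg.2 hs'.2
    rw [slope_def_field]
    exact div_nonneg_of_nonpos (by linarith) h2.le
  exact ge_of_tendsto hs hev

/-- 1D second derivative test (necessary condition): local max implies second deriv ≤ 0. -/
lemma second_deriv_nonpos_of_isLocalMax {g : ℝ → ℝ}
    (hdiff : ∀ᶠ t in 𝓝 (0:ℝ), DifferentiableAt ℝ g t)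
    (h2 : DifferentiableAt ℝ (deriv g) 0)
    (hmax : IsLocalMax g 0) : deriv (deriv g) 0 ≤ 0 := by
  by_contra hpos
  push_neg at hpos
  have hg'0 : deriv g 0 = 0 := hmax.deriv_eq_zero
  have hs : Tendsto (slope (deriv g) 0) (𝓝[>] (0:ℝ)) (𝓝 (deriv (deriv g) 0)) :=
    (hasDerivAt_iff_tendsto_slope.1 h2.hasDerivAt).mono_left
      (nhdsWithin_mono _ (fun x hx => ne_of_gt hx))
  have hev : ∀ᶠ t in 𝓝[>] (0:ℝ), 0 < deriv g t := by
    filter_upwards [hs.eventually (eventually_gt_nhds hpos), self_mem_nhdsWithin]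
      with t ht ht'
    have hsl : slope (deriv g) 0 t = deriv g t / t := by
      rw [slope_def_field, hg'0, sub_zero, sub_zero]
    rw [hsl] at ht
    have := mul_pos ht (show (0:ℝ) < t from ht')
    rwa [div_mul_cancel₀] at this
    exact ne_of_gt ht'
  obtain ⟨δ₁, hδ₁, hI₁⟩ := Metric.eventually_nhds_iff.1 (hmax.and hdiff)
  obtain ⟨δ₂, hδ₂, hI₂⟩ := Metric.eventually_nhds_iff.1 (eventually_nhdsWithin_iff.1 hev)
  set δ := min δ₁ δ₂ / 2 with hδdef
  have hδ : 0 < δ := by positivity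
  have hδ₁' : δ < δ₁ := by
    have h1 : min δ₁ δ₂ ≤ δ₁ := min_le_left _ _
    have : δ ≤ δ₁ / 2 := by rw [hδdef]; linarith
    linarith
  have hδ₂' : δ < δ₂ := by
    have h1 : min δ₁ δ₂ ≤ δ₂ := min_le_right _ _
    have : δ ≤ δ₂ / 2 := by rw [hδdef]; linarith
    linarith
  have hmono : StrictMonoOn g (Icc 0 δ) := by
    apply strictMonoOn_of_deriv_pos (convex_Icc _ _)
    · intro t ht
      exact ((hI₁ (show dist t 0 < δ₁ by
        rw [Real.dist_eq, sub_zero, abs_of_nonneg ht.1]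
        exact lt_of_le_of_lt ht.2 hδ₁')).2).continuousAt.continuousWithinAt
    · intro t ht
      rw [interior_Icc] at ht
      refine hI₂ ?_ ht.1
      rw [Real.dist_eq, sub_zero, abs_of_nonneg ht.1.le]
      exact lt_trans ht.2 hδ₂'
  have hlt : g 0 < g δ := hmono ⟨le_refl _, hδ.le⟩ ⟨hδ.le, le_refl _⟩ hδ
  have hge : g δ ≤ g 0 := (hI₁ (show dist δ 0 < δ₁ by
    rw [Real.dist_eq, sub_zero, abs_of_nonneg hδ.le]; exact hδ₁')).1
  linarith

lemma pd2_nonpos {d : ℕ} {f : EuclideanSpace ℝ (Fin d) → ℝ}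
    {x₀ : EuclideanSpace ℝ (Fin d)} (i : Fin d)
    (hf : ∀ᶠ y in 𝓝 x₀, DifferentiableAt ℝ f y)
    (hf2 : DifferentiableAt ℝ (pd i f) x₀)
    (hmax : IsLocalMax f x₀) : pd i (pd i f) x₀ ≤ 0 := by
  set e : EuclideanSpace ℝ (Fin d) := EuclideanSpace.single i 1 with he
  set γ : ℝ → EuclideanSpace ℝ (Fin d) := fun t => x₀ + t • e with hγdef
  have hγ : ∀ t, HasDerivAt γ e t := by
    intro t
    have h1 : HasDerivAt (fun t : ℝ => t • e) ((1:ℝ) • e) t :=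
      (hasDerivAt_id t).smul_const e
    have h2 := h1.const_add x₀
    rw [one_smul] at h2
    exact h2
  have hγ0 : γ 0 = x₀ := by simp [hγdef]
  have hγt : Tendsto γ (𝓝 0) (𝓝 x₀) := by
    have := (hγ 0).continuousAt.tendsto
    rwa [hγ0] at this
  set g : ℝ → ℝ := fun t => f (γ t) with hgdef
  have hgev : ∀ᶠ t in 𝓝 (0:ℝ), DifferentiableAt ℝ g t ∧ deriv g t = pd i f (γ t) := by
    filter_upwards [hγt.eventually hf] with t ht
    have H : HasDerivAt g (fderiv ℝ f (γ t) e) t :=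
      ht.hasFDerivAt.comp_hasDerivAt t (hγ t)
    exact ⟨H.differentiableAt, H.deriv⟩
  have hderiv_eq : deriv g =ᶠ[𝓝 (0:ℝ)] fun t => pd i f (γ t) :=
    hgev.mono fun t ht => ht.2
  have hc : HasDerivAt (fun t => pd i f (γ t)) (pd i (pd i f) x₀) 0 := by
    have hf2' : HasFDerivAt (pd i f) (fderiv ℝ (pd i f) x₀) (γ 0) := by
      rw [hγ0]; exact hf2.hasFDerivAt
    exact hf2'.comp_hasDerivAt 0 (hγ 0)
  have h2' : HasDerivAt (deriv g) (pd i (pd i f) x₀) 0 :=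
    hc.congr_of_eventuallyEq hderiv_eq
  have hgmax : IsLocalMax g 0 := by
    have := hγt.eventually hmax
    filter_upwards [this] with t ht
    simpa [hgdef, hγ0] using ht
  have := second_deriv_nonpos_of_isLocalMax (hgev.mono fun t ht => ht.1)
    h2'.differentiableAt hgmax
  rwa [h2'.deriv] at this

lemma pd_diff_of_contDiff {d : ℕ} {f : EuclideanSpace ℝ (Fin d) → ℝ}
    (hf : ContDiff ℝ 2 f) (i : Fin d) : Differentiable ℝ (pd i f) := by
  have h1 : ContDiff ℝ 1 (fderiv ℝ f) := hf.fderiv_right (by norm_num)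
  have h2 : ContDiff ℝ 1 (fun x => (fderiv ℝ f x) (EuclideanSpace.single i 1)) := by
    have := (ContinuousLinearMap.apply ℝ ℝ
      (EuclideanSpace.single i (1:ℝ))).contDiff.comp h1
    exact this
  exact h2.differentiable (by norm_num)

lemma pd_sub {d : ℕ} {f g : EuclideanSpace ℝ (Fin d) → ℝ}
    {y : EuclideanSpace ℝ (Fin d)} (i : Fin d)
    (hfy : DifferentiableAt ℝ f y) (hgy : DifferentiableAt ℝ g y) :
    pd i (fun x => f x - g x) y = pd i f y - pd i g y := by
  unfold pd
  rw [fderiv_fun_sub hfy hgy]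
  rfl

section Radial

variable {d : ℕ}

/-- The squared norm in coordinates. -/
noncomputable def Qf (x : EuclideanSpace ℝ (Fin d)) : ℝ := ∑ i, x i ^ 2

/-- Derivative of `Qf`. -/
noncomputable def LQ (x : EuclideanSpace ℝ (Fin d)) : EuclideanSpace ℝ (Fin d) →L[ℝ] ℝ :=
  ∑ i, (2 * x i) • EuclideanSpace.proj i

lemma Qf_eq_norm_sq (x : EuclideanSpace ℝ (Fin d)) : Qf x = ‖x‖ ^ 2 := by
  rw [EuclideanSpace.norm_eq, Real.sq_sqrt]
  · unfold Qf
    congr 1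
    ext i
    rw [Real.norm_eq_abs, sq_abs]
  · positivity

lemma Qf_nonneg (x : EuclideanSpace ℝ (Fin d)) : 0 ≤ Qf x := by
  rw [Qf_eq_norm_sq]; positivity

lemma hasFDerivAt_Qf (x : EuclideanSpace ℝ (Fin d)) : HasFDerivAt Qf (LQ x) x := by
  have h : ∀ i : Fin d, HasFDerivAt (fun y : EuclideanSpace ℝ (Fin d) => y i ^ 2)
      ((2 * x i) • (EuclideanSpace.proj i : EuclideanSpace ℝ (Fin d) →L[ℝ] ℝ)) x := by
    intro i
    have h1 : HasFDerivAt (fun y : EuclideanSpace ℝ (Fin d) => EuclideanSpace.proj i y)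
        (EuclideanSpace.proj i : EuclideanSpace ℝ (Fin d) →L[ℝ] ℝ) x :=
      (EuclideanSpace.proj i : EuclideanSpace ℝ (Fin d) →L[ℝ] ℝ).hasFDerivAt
    have h2 := h1.mul h1
    have hfun : (fun y : EuclideanSpace ℝ (Fin d) => y i ^ 2)
        = fun y => (EuclideanSpace.proj i : EuclideanSpace ℝ (Fin d) →L[ℝ] ℝ) y
            * (EuclideanSpace.proj i : EuclideanSpace ℝ (Fin d) →L[ℝ] ℝ) y := by
      funext y; simp [sq, PiLp.proj_apply]
    have h3 : (2 * x i) • (EuclideanSpace.proj i : EuclideanSpace ℝ (Fin d) →L[ℝ] ℝ)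
        = (EuclideanSpace.proj i : EuclideanSpace ℝ (Fin d) →L[ℝ] ℝ) x
            • (EuclideanSpace.proj i : EuclideanSpace ℝ (Fin d) →L[ℝ] ℝ)
          + (EuclideanSpace.proj i : EuclideanSpace ℝ (Fin d) →L[ℝ] ℝ) x
            • (EuclideanSpace.proj i : EuclideanSpace ℝ (Fin d) →L[ℝ] ℝ) := by
      ext y
      simp [PiLp.proj_apply]
      ring
    rw [hfun, h3]
    exact h2
  have := HasFDerivAt.sum (fun i (_ : i ∈ Finset.univ) => h i)
  rw [Finset.sum_fn] at this
  exact this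

lemma continuous_Qf : Continuous (Qf (d := d)) := by
  have : ∀ x, ContinuousAt (Qf (d := d)) x :=
    fun x => (hasFDerivAt_Qf x).differentiableAt.continuousAt
  exact continuous_iff_continuousAt.2 this

lemma LQ_apply_single (x : EuclideanSpace ℝ (Fin d)) (i : Fin d) :
    LQ x (EuclideanSpace.single i 1) = 2 * x i := by
  unfold LQ
  rw [ContinuousLinearMap.sum_apply]
  have : ∀ j : Fin d, ((2 * x j) • EuclideanSpace.proj j) (EuclideanSpace.single i 1)
      = if j = i then 2 * x j else 0 := by
    intro j
    rw [ContinuousLinearMap.smul_apply]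
    simp [PiLp.proj_apply, EuclideanSpace.single_apply]
  rw [Finset.sum_congr rfl (fun j _ => this j)]
  simp

lemma radial_facts (g g₁ g₂ : ℝ → ℝ) (S : Set ℝ) (hS : IsOpen S)
    (hg : ∀ s ∈ S, HasDerivAt g (g₁ s) s) (hg₁ : ∀ s ∈ S, HasDerivAt g₁ (g₂ s) s) :
    (∀ x : EuclideanSpace ℝ (Fin d), Qf x ∈ S →
        DifferentiableAt ℝ (fun y => g (Qf y)) x) ∧
    (∀ (i : Fin d) (x : EuclideanSpace ℝ (Fin d)), Qf x ∈ S →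
        DifferentiableAt ℝ (pd i (fun y => g (Qf y))) x) ∧
    (∀ x : EuclideanSpace ℝ (Fin d), Qf x ∈ S →
        ∑ i, pd i (pd i (fun y => g (Qf y))) x
          = 4 * g₂ (Qf x) * Qf x + 2 * d * g₁ (Qf x)) := by
  set v : EuclideanSpace ℝ (Fin d) → ℝ := fun y => g (Qf y) with hv
  have hUopen : IsOpen (Qf ⁻¹' S : Set (EuclideanSpace ℝ (Fin d))) :=
    hS.preimage continuous_Qf
  have hvd : ∀ x, Qf x ∈ S → HasFDerivAt v (g₁ (Qf x) • LQ x) x := by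
    intro x hx
    exact (hg _ hx).comp_hasFDerivAt x (hasFDerivAt_Qf x)
  have hpd : ∀ (i : Fin d) x, Qf x ∈ S → pd i v x = g₁ (Qf x) * (2 * x i) := by
    intro i x hx
    have h0 : pd i v x = fderiv ℝ v x (EuclideanSpace.single i 1) := rfl
    rw [h0, (hvd x hx).fderiv, ContinuousLinearMap.smul_apply, LQ_apply_single]
    rfl
  have hφ : ∀ (i : Fin d) x, Qf x ∈ S →
      HasFDerivAt (fun y => g₁ (Qf y) * (2 * y i))
        (g₁ (Qf x) • ((2:ℝ) • EuclideanSpace.proj i)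
          + (2 * x i) • (g₂ (Qf x) • LQ x)) x := by
    intro i x hx
    have hc : HasFDerivAt (fun y => g₁ (Qf y)) (g₂ (Qf x) • LQ x) x :=
      (hg₁ _ hx).comp_hasFDerivAt x (hasFDerivAt_Qf x)
    have h1 : HasFDerivAt (fun y : EuclideanSpace ℝ (Fin d) => EuclideanSpace.proj i y)
        (EuclideanSpace.proj i : EuclideanSpace ℝ (Fin d) →L[ℝ] ℝ) x :=
      (EuclideanSpace.proj i : EuclideanSpace ℝ (Fin d) →L[ℝ] ℝ).hasFDerivAt
    have hd2 : HasFDerivAt (fun y : EuclideanSpace ℝ (Fin d) => 2 * y i)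
        ((2:ℝ) • EuclideanSpace.proj i) x := h1.const_mul 2
    exact hc.mul hd2
  have heq : ∀ (i : Fin d) x, Qf x ∈ S →
      pd i v =ᶠ[𝓝 x] fun y => g₁ (Qf y) * (2 * y i) := by
    intro i x hx
    filter_upwards [hUopen.mem_nhds hx] with y hy
    exact hpd i y hy
  refine ⟨fun x hx => (hvd x hx).differentiableAt, ?_, ?_⟩
  · intro i x hx
    exact (Filter.EventuallyEq.differentiableAt_iff (heq i x hx)).2
      (hφ i x hx).differentiableAt
  · intro x hx
    have hterm : ∀ i : Fin d, pd i (pd i v) x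
        = g₂ (Qf x) * (2 * x i) ^ 2 + g₁ (Qf x) * 2 := by
      intro i
      have h0 : pd i (pd i v) x = fderiv ℝ (pd i v) x (EuclideanSpace.single i 1) := rfl
      rw [h0, Filter.EventuallyEq.fderiv_eq (heq i x hx), (hφ i x hx).fderiv]
      simp only [ContinuousLinearMap.add_apply, ContinuousLinearMap.smul_apply,
        LQ_apply_single, PiLp.proj_apply, EuclideanSpace.single_apply,
        smul_eq_mul, eq_self_iff_true, if_true]
      ring
    rw [Finset.sum_congr rfl (fun i _ => hterm i)]
    rw [Finset.sum_add_distrib, ← Finset.mul_sum, Finset.sum_const]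
    have hQ : ∑ i : Fin d, (2 * x i) ^ 2 = 4 * Qf x := by
      unfold Qf
      rw [Finset.mul_sum]
      congr 1; ext i; ring
    rw [hQ]
    simp [Finset.card_univ]
    ring

end Radial

lemma comparison {d : ℕ} (p m : ℝ) (hp0 : 0 < p)
    (α : EuclideanSpace ℝ (Fin d) → ℝ) (hα_pos : ∀ x, 0 < α x)
    (u : EuclideanSpace ℝ (Fin d) → ℝ → ℝ)
    (hu_cont : ContinuousOn (fun q : EuclideanSpace ℝ (Fin d) × ℝ => u q.1 q.2)
      (Set.univ ×ˢ Ici (0 : ℝ)))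
    (hu_x : ∀ t : ℝ, 0 < t → ContDiff ℝ 2 (fun x => u x t))
    (hu_t : ∀ x, ContDiffOn ℝ 1 (fun s => u x s) (Ioi (0 : ℝ)))
    (hpde : ∀ x t, 0 < t →
      deriv (fun s => u x s) t =
        (1 + ‖x‖) ^ m * (∑ i, pd i (pd i (fun y => u y t)) x) - α x * u x t ^ p)
    (hinit : ∀ x, u x 0 = 0)
    (T ρ : ℝ) (hT : 0 < T) (hρ : 0 < ρ)
    (v : EuclideanSpace ℝ (Fin d) → ℝ) (U : Set (EuclideanSpace ℝ (Fin d)))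
    (hU : IsOpen U) (hUb : Metric.closedBall 0 ρ ⊆ U)
    (hv0 : ∀ x ∈ U, 0 ≤ v x)
    (hv_diff : ∀ x ∈ U, DifferentiableAt ℝ v x)
    (hv_pd : ∀ (i : Fin d), ∀ x ∈ U, DifferentiableAt ℝ (pd i v) x)
    (hv_super : ∀ x : EuclideanSpace ℝ (Fin d), ‖x‖ ≤ ρ →
      (1 + ‖x‖) ^ m * (∑ i, pd i (pd i v) x) ≤ α x * v x ^ p)
    (hbdry : ∀ x : EuclideanSpace ℝ (Fin d), ‖x‖ = ρ → ∀ t ∈ Icc (0:ℝ) T, u x t < v x) :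
    ∀ x : EuclideanSpace ℝ (Fin d), ‖x‖ ≤ ρ → ∀ t ∈ Icc (0:ℝ) T, u x t ≤ v x := by
  set K : Set (EuclideanSpace ℝ (Fin d) × ℝ) := Metric.closedBall 0 ρ ×ˢ Icc (0:ℝ) T with hK
  have hKc : IsCompact K := (isCompact_closedBall _ _).prod isCompact_Icc
  have hKne : K.Nonempty := ⟨(0, 0), by
    constructor
    · simp [Metric.mem_closedBall, hρ.le]
    · exact ⟨le_refl _, hT.le⟩⟩
  set F : EuclideanSpace ℝ (Fin d) × ℝ → ℝ := fun q => u q.1 q.2 - v q.1 with hF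
  have hballU : ∀ x : EuclideanSpace ℝ (Fin d), ‖x‖ ≤ ρ → x ∈ U := by
    intro x hx
    exact hUb (by simpa [Metric.mem_closedBall, dist_eq_norm] using hx)
  have hFc : ContinuousOn F K := by
    apply ContinuousOn.sub
    · apply hu_cont.mono
      rintro ⟨x, t⟩ ⟨_, ht⟩
      exact ⟨trivial, ht.1⟩
    · have hvc : ContinuousOn v U := fun x hx => (hv_diff x hx).continuousAt.continuousWithinAt
      apply ContinuousOn.comp hvc continuousOn_fst
      rintro ⟨x, t⟩ ⟨hx, _⟩
      exact hballU x (by simpa [Metric.mem_closedBall, dist_eq_norm] using hx)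
  obtain ⟨z₀, hz₀K, hz₀max⟩ := hKc.exists_isMaxOn hKne hFc
  obtain ⟨hx₀K, ht₀K⟩ := hz₀K
  set x₀ := z₀.1 with hx₀def
  set t₀ := z₀.2 with ht₀def
  have hx₀ : ‖x₀‖ ≤ ρ := by simpa [Metric.mem_closedBall, dist_eq_norm] using hx₀K
  have hx₀U : x₀ ∈ U := hballU x₀ hx₀
  -- it suffices to show F z₀ ≤ 0
  suffices hsuff : F z₀ ≤ 0 by
    intro x hx t ht
    have hmem : (x, t) ∈ K := ⟨by simpa [Metric.mem_closedBall, dist_eq_norm] using hx, ht⟩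
    have h5 := hz₀max hmem
    rw [Set.mem_setOf_eq] at h5
    have h6 : u x t - v x ≤ F z₀ := h5
    linarith [h6, hsuff]
  by_contra hpos
  push_neg at hpos
  -- boundary exclusion
  have hx₀lt : ‖x₀‖ < ρ := by
    rcases lt_or_eq_of_le hx₀ with h | h
    · exact h
    · exfalso
      have := hbdry x₀ h t₀ ht₀K
      have h2 : F z₀ = u x₀ t₀ - v x₀ := rfl
      rw [h2] at hpos
      linarith
  -- t₀ > 0
  have ht₀pos : 0 < t₀ := by
    rcases lt_or_eq_of_le ht₀K.1 with h | h
    · exact h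
    · exfalso
      have h2 : F z₀ = u x₀ t₀ - v x₀ := rfl
      rw [h2, ← h, hinit x₀] at hpos
      have := hv0 x₀ hx₀U
      linarith
  -- time derivative nonneg
  have hdiff_t : DifferentiableAt ℝ (fun s => u x₀ s) t₀ := by
    have := (hu_t x₀).contDiffAt (isOpen_Ioi.mem_nhds ht₀pos)
    exact this.differentiableAt (by norm_num)
  have hmax_t : ∀ s ∈ Icc (0:ℝ) T, u x₀ s ≤ u x₀ t₀ := by
    intro s hs
    have hmem : ((x₀ : EuclideanSpace ℝ (Fin d)), s) ∈ K := ⟨hx₀K, hs⟩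
    have h5 := hz₀max hmem
    rw [Set.mem_setOf_eq] at h5
    have h6 : u x₀ s - v x₀ ≤ u x₀ t₀ - v x₀ := h5
    linarith [h6]
  have h_t : 0 ≤ deriv (fun s => u x₀ s) t₀ :=
    deriv_nonneg_of_isMaxOn ht₀pos ht₀K.2 hdiff_t hmax_t
  -- spatial local max
  set f : EuclideanSpace ℝ (Fin d) → ℝ := fun y => u y t₀ - v y with hf
  have hmaxx : IsLocalMax f x₀ := by
    have hball : Metric.ball (0:EuclideanSpace ℝ (Fin d)) ρ ∈ 𝓝 x₀ :=
      Metric.isOpen_ball.mem_nhds (by simpa [Metric.mem_ball, dist_eq_norm] using hx₀lt)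
    filter_upwards [hball] with y hy
    have hmem : ((y : EuclideanSpace ℝ (Fin d)), t₀) ∈ K :=
      ⟨Metric.ball_subset_closedBall hy, ht₀K⟩
    have := hz₀max hmem
    simpa [hf, hF] using this
  have hu2 : ContDiff ℝ 2 (fun y => u y t₀) := hu_x t₀ ht₀pos
  have hu2diff : Differentiable ℝ (fun y => u y t₀) := hu2.differentiable (by norm_num)
  -- second derivative comparison
  have hlap : ∀ i : Fin d, pd i (pd i (fun y => u y t₀)) x₀ ≤ pd i (pd i v) x₀ := by
    intro i
    have hfev : ∀ᶠ y in 𝓝 x₀, DifferentiableAt ℝ f y := by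
      filter_upwards [hU.mem_nhds hx₀U] with y hy
      exact (hu2diff y).sub (hv_diff y hy)
    have hpd_eq : pd i f =ᶠ[𝓝 x₀] fun y => pd i (fun z => u z t₀) y - pd i v y := by
      filter_upwards [hU.mem_nhds hx₀U] with y hy
      exact pd_sub i (hu2diff y) (hv_diff y hy)
    have hdsub : DifferentiableAt ℝ (fun y => pd i (fun z => u z t₀) y - pd i v y) x₀ :=
      (pd_diff_of_contDiff hu2 i x₀).sub (hv_pd i x₀ hx₀U)
    have hpdf_diff : DifferentiableAt ℝ (pd i f) x₀ :=
      (Filter.EventuallyEq.differentiableAt_iff hpd_eq).2 hdsub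
    have key : pd i (pd i f) x₀ ≤ 0 := pd2_nonpos i hfev hpdf_diff hmaxx
    have hsplit : pd i (pd i f) x₀
        = pd i (pd i (fun z => u z t₀)) x₀ - pd i (pd i v) x₀ := by
      have h0 : pd i (pd i f) x₀ = fderiv ℝ (pd i f) x₀ (EuclideanSpace.single i 1) := rfl
      rw [h0, Filter.EventuallyEq.fderiv_eq hpd_eq]
      have := pd_sub (f := pd i (fun z => u z t₀)) (g := pd i v) i
        (pd_diff_of_contDiff hu2 i x₀) (hv_pd i x₀ hx₀U)
      exact this
    linarith [key, hsplit.symm.le, hsplit.le]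
  have hsum : (∑ i, pd i (pd i (fun y => u y t₀)) x₀) ≤ ∑ i, pd i (pd i v) x₀ :=
    Finset.sum_le_sum fun i _ => hlap i
  -- combine
  have hcoef : (0:ℝ) < (1 + ‖x₀‖) ^ m := Real.rpow_pos_of_pos (by positivity) m
  have hpde' := hpde x₀ t₀ ht₀pos
  rw [hpde'] at h_t
  have h1 : (1 + ‖x₀‖) ^ m * (∑ i, pd i (pd i (fun y => u y t₀)) x₀)
      ≤ (1 + ‖x₀‖) ^ m * (∑ i, pd i (pd i v) x₀) :=
    mul_le_mul_of_nonneg_left hsum hcoef.le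
  have h2 := hv_super x₀ hx₀lt.le
  have hvlt : v x₀ < u x₀ t₀ := by
    have h3 : F z₀ = u x₀ t₀ - v x₀ := rfl
    rw [h3] at hpos; linarith
  have hrpow : v x₀ ^ p < u x₀ t₀ ^ p :=
    Real.rpow_lt_rpow (hv0 x₀ hx₀U) hvlt hp0
  have h4 : α x₀ * v x₀ ^ p < α x₀ * u x₀ t₀ ^ p :=
    mul_lt_mul_of_pos_left hrpow (hα_pos x₀)
  linarith

set_option maxHeartbeats 1000000 in
lemma step1 {d : ℕ} (p : ℝ) (hp1 : 1 < p) (m : ℝ)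
    (α : EuclideanSpace ℝ (Fin d) → ℝ)
    (c : ℝ) (hc : 0 < c)
    (hα_lower : ∀ x, c * (1 + ‖x‖) ^ (m - 2) ≤ α x)
    (u : EuclideanSpace ℝ (Fin d) → ℝ → ℝ)
    (hu_cont : ContinuousOn (fun q : EuclideanSpace ℝ (Fin d) × ℝ => u q.1 q.2)
      (Set.univ ×ˢ Ici (0 : ℝ)))
    (hu_x : ∀ t : ℝ, 0 < t → ContDiff ℝ 2 (fun x => u x t))
    (hu_t : ∀ x, ContDiffOn ℝ 1 (fun s => u x s) (Ioi (0 : ℝ)))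
    (hpde : ∀ x t, 0 < t →
      deriv (fun s => u x s) t =
        (1 + ‖x‖) ^ m * (∑ i, pd i (pd i (fun y => u y t)) x) - α x * u x t ^ p)
    (hinit : ∀ x, u x 0 = 0) :
    ∃ M : ℝ, 0 < M ∧ ∀ x t, 0 ≤ t → u x t ≤ M := by
  have hp0 : (0:ℝ) < p := lt_trans one_pos hp1
  have hpm1 : (0:ℝ) < p - 1 := by linarith
  obtain ⟨q, hqdef⟩ : ∃ q : ℝ, q = 2 / (p - 1) := ⟨_, rfl⟩
  have hq : 0 < q := by rw [hqdef]; positivity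
  have hqp : q * p = q + 2 := by
    rw [hqdef]
    field_simp
    ring
  obtain ⟨Cq, hCqdef⟩ : ∃ Cq : ℝ, Cq = 2 * q * d + 4 * (q * (q + 1)) := ⟨_, rfl⟩
  have hd0 : (0:ℝ) ≤ (d:ℝ) := Nat.cast_nonneg d
  have hCq : 0 < Cq := by
    rw [hCqdef]
    nlinarith [hq, hd0]
  have hα_pos : ∀ x, 0 < α x := fun x =>
    lt_of_lt_of_le (mul_pos hc (Real.rpow_pos_of_pos (by positivity) _)) (hα_lower x)
  have hMpos : 0 < (Cq / c) ^ (1 / (p - 1)) * 2 ^ q :=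
    mul_pos (Real.rpow_pos_of_pos (div_pos hCq hc) _) (Real.rpow_pos_of_pos two_pos q)
  refine ⟨(Cq / c) ^ (1 / (p - 1)) * 2 ^ q, hMpos, ?_⟩
  intro xs ts hts
  rcases eq_or_lt_of_le hts with h0 | hT
  · rw [← h0, hinit]
    exact hMpos.le
  -- geometry
  obtain ⟨R, hRdef⟩ : ∃ R : ℝ, R = 2 * ‖xs‖ + 2 := ⟨_, rfl⟩
  have hxs0 : (0:ℝ) ≤ ‖xs‖ := norm_nonneg _
  have hR2 : 2 ≤ R := by rw [hRdef]; linarith only [hxs0]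
  have hRpos : 0 < R := by linarith only [hR2]
  have hxs_half : ‖xs‖ ≤ R / 2 := by rw [hRdef]; linarith only [hxs0]
  have hxs_sq : ‖xs‖ ^ 2 ≤ R ^ 2 / 4 := by
    have h1 : ‖xs‖ ^ 2 ≤ (R / 2) ^ 2 := pow_le_pow_left₀ hxs0 hxs_half 2
    calc ‖xs‖ ^ 2 ≤ (R / 2) ^ 2 := h1
      _ = R ^ 2 / 4 := by ring
  have hRsqpos : (0:ℝ) < R ^ 2 := pow_pos hRpos 2
  have hxs_sq_lt : ‖xs‖ ^ 2 < R ^ 2 := by linarith only [hxs_sq, hRsqpos]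
  -- barrier constant
  obtain ⟨A, hAdef⟩ : ∃ A : ℝ, A = (Cq * R ^ 2 * (1 + R) ^ 2 / c) ^ (1 / (p - 1)) := ⟨_, rfl⟩
  have hXbase : (0:ℝ) < Cq * R ^ 2 * (1 + R) ^ 2 / c :=
    div_pos (mul_pos (mul_pos hCq hRsqpos) (pow_pos (by linarith) 2)) hc
  have hA : 0 < A := by rw [hAdef]; exact Real.rpow_pos_of_pos hXbase _
  have hApow : A ^ (p - 1) = Cq * R ^ 2 * (1 + R) ^ 2 / c := by
    rw [hAdef, ← Real.rpow_mul hXbase.le, one_div,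
      inv_mul_cancel₀ (ne_of_gt hpm1), Real.rpow_one]
  have hAp : A ^ p = Cq * R ^ 2 * (1 + R) ^ 2 / c * A := by
    have h1 : A ^ p = A ^ ((p - 1) + 1) := by norm_num
    rw [h1, Real.rpow_add_one (ne_of_gt hA), hApow]
  -- barrier profile
  set g : ℝ → ℝ := fun s => A * (R ^ 2 - s) ^ (-q) with hgdef
  set g₁ : ℝ → ℝ := fun s => A * q * (R ^ 2 - s) ^ (-q - 1) with hg₁def
  set g₂ : ℝ → ℝ := fun s => A * (q * (q + 1)) * (R ^ 2 - s) ^ (-q - 2) with hg₂def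
  have hg : ∀ s ∈ Iio (R ^ 2 : ℝ), HasDerivAt g (g₁ s) s := by
    intro s hs
    have hXs : (0:ℝ) < R ^ 2 - s := by simpa [sub_pos] using hs
    have h1 : HasDerivAt (fun s : ℝ => R ^ 2 - s) (-1) s := by
      simpa using (hasDerivAt_id s).const_sub (R ^ 2)
    have h2 : HasDerivAt (fun y : ℝ => y ^ (-q)) (-q * (R ^ 2 - s) ^ (-q - 1)) (R ^ 2 - s) :=
      Real.hasDerivAt_rpow_const (Or.inl (ne_of_gt hXs))
    have h3 := (h2.comp s h1).const_mul A
    convert h3 using 1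
    show A * q * (R ^ 2 - s) ^ (-q - 1) = _
    ring
    all_goals rfl
  have hg₁ : ∀ s ∈ Iio (R ^ 2 : ℝ), HasDerivAt g₁ (g₂ s) s := by
    intro s hs
    have hXs : (0:ℝ) < R ^ 2 - s := by simpa [sub_pos] using hs
    have h1 : HasDerivAt (fun s : ℝ => R ^ 2 - s) (-1) s := by
      simpa using (hasDerivAt_id s).const_sub (R ^ 2)
    have h2 : HasDerivAt (fun y : ℝ => y ^ (-q - 1)) ((-q - 1) * (R ^ 2 - s) ^ (-q - 1 - 1))
        (R ^ 2 - s) := Real.hasDerivAt_rpow_const (Or.inl (ne_of_gt hXs))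
    have h3 := (h2.comp s h1).const_mul (A * q)
    convert h3 using 1
    show A * (q * (q + 1)) * (R ^ 2 - s) ^ (-q - 2) = _
    have h4 : -q - 1 - 1 = -q - 2 := by ring
    rw [h4]
    ring
    all_goals rfl
  obtain ⟨hrd, hrpd, hrlap⟩ := radial_facts g g₁ g₂ (Iio (R ^ 2 : ℝ)) isOpen_Iio hg hg₁
  set v : EuclideanSpace ℝ (Fin d) → ℝ := fun y => g (Qf y) with hvdef
  set U : Set (EuclideanSpace ℝ (Fin d)) := Qf ⁻¹' (Iio (R ^ 2 : ℝ)) with hUdef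
  have hUopen : IsOpen U := isOpen_Iio.preimage continuous_Qf
  -- bound on the big cylinder
  set Kb : Set (EuclideanSpace ℝ (Fin d) × ℝ) :=
    Metric.closedBall 0 R ×ˢ Icc (0:ℝ) ts with hKb
  have hKbc : IsCompact Kb := (isCompact_closedBall _ _).prod isCompact_Icc
  have hKbne : Kb.Nonempty := ⟨(0, 0), by
    constructor
    · simp [Metric.mem_closedBall, hRpos.le]
    · exact ⟨le_refl _, hT.le⟩⟩
  have hFc : ContinuousOn (fun q : EuclideanSpace ℝ (Fin d) × ℝ => u q.1 q.2) Kb := by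
    apply hu_cont.mono
    rintro ⟨y, s⟩ ⟨_, hs⟩
    exact ⟨trivial, hs.1⟩
  obtain ⟨zb, hzbK, hzbmax⟩ := hKbc.exists_isMaxOn hKbne hFc
  obtain ⟨M₀, hM₀⟩ : ∃ M₀ : ℝ, M₀ = u zb.1 zb.2 := ⟨_, rfl⟩
  have hM₀b : ∀ y : EuclideanSpace ℝ (Fin d), ‖y‖ ≤ R → ∀ s ∈ Icc (0:ℝ) ts, u y s ≤ M₀ := by
    intro y hy s hs
    have hmem : ((y : EuclideanSpace ℝ (Fin d)), s) ∈ Kb :=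
      ⟨by simpa [Metric.mem_closedBall, dist_eq_norm] using hy, hs⟩
    rw [hM₀]
    exact hzbmax hmem
  obtain ⟨M₁, hM₁⟩ : ∃ M₁ : ℝ, M₁ = max M₀ 0 + 1 := ⟨_, rfl⟩
  have hM₁pos : 0 < M₁ := by
    have h9 := le_max_right M₀ 0
    rw [hM₁]; linarith only [h9]
  have hM₀M₁ : M₀ < M₁ := by
    have h9 := le_max_left M₀ 0
    rw [hM₁]; linarith only [h9]
  -- choice of ρ
  obtain ⟨tt, httdef⟩ :
      ∃ tt : ℝ, tt = min ((R ^ 2 - ‖xs‖ ^ 2) / 2) ((A / M₁) ^ (1 / q)) := ⟨_, rfl⟩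
  have htt_pos : 0 < tt := by
    rw [httdef]
    apply lt_min
    · linarith only [hxs_sq_lt]
    · exact Real.rpow_pos_of_pos (div_pos hA hM₁pos) _
  have htt1 : tt ≤ (R ^ 2 - ‖xs‖ ^ 2) / 2 := by rw [httdef]; exact min_le_left _ _
  have htt2 : tt ≤ (A / M₁) ^ (1 / q) := by rw [httdef]; exact min_le_right _ _
  have hR2tt : 0 < R ^ 2 - tt := by
    have h1 : (0:ℝ) ≤ ‖xs‖ ^ 2 := sq_nonneg _
    linarith only [h1, htt1, hRsqpos]
  obtain ⟨ρ, hρdef⟩ : ∃ ρ : ℝ, ρ = Real.sqrt (R ^ 2 - tt) := ⟨_, rfl⟩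
  have hρsq : ρ ^ 2 = R ^ 2 - tt := by rw [hρdef]; exact Real.sq_sqrt hR2tt.le
  have hρpos : 0 < ρ := by rw [hρdef]; exact Real.sqrt_pos.2 hR2tt
  have hρR : ρ < R := by
    have h1 : ρ ^ 2 < R ^ 2 := by rw [hρsq]; linarith only [htt_pos]
    exact lt_of_pow_lt_pow_left₀ 2 hRpos.le h1
  have hxsρ : ‖xs‖ < ρ := by
    have h1 : ‖xs‖ ^ 2 < ρ ^ 2 := by rw [hρsq]; linarith only [htt1, hxs_sq_lt]
    exact lt_of_pow_lt_pow_left₀ 2 hρpos.le h1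
  -- facts about v on U
  have hmemU : ∀ y : EuclideanSpace ℝ (Fin d), ‖y‖ ≤ ρ → Qf y ∈ Iio (R ^ 2 : ℝ) := by
    intro y hy
    have h1 : Qf y = ‖y‖ ^ 2 := Qf_eq_norm_sq y
    have h2 : ‖y‖ ^ 2 ≤ ρ ^ 2 := pow_le_pow_left₀ (norm_nonneg _) hy 2
    have h3 : Qf y < R ^ 2 := by rw [h1]; rw [hρsq] at h2; linarith only [h2, htt_pos]
    exact h3
  have hUb : Metric.closedBall (0 : EuclideanSpace ℝ (Fin d)) ρ ⊆ U := by
    intro y hy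
    have : ‖y‖ ≤ ρ := by simpa [Metric.mem_closedBall, dist_eq_norm] using hy
    exact hmemU y this
  have hv0 : ∀ y ∈ U, 0 ≤ v y := by
    intro y hy
    have hXs : (0:ℝ) < R ^ 2 - Qf y := by
      have h9 : Qf y < R ^ 2 := hy
      linarith only [h9]
    exact (mul_pos hA (Real.rpow_pos_of_pos hXs _)).le
  -- supersolution property
  have hv_super : ∀ y : EuclideanSpace ℝ (Fin d), ‖y‖ ≤ ρ →
      (1 + ‖y‖) ^ m * (∑ i, pd i (pd i v) y) ≤ α y * v y ^ p := by
    intro y hy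
    have hyU : Qf y ∈ Iio (R ^ 2 : ℝ) := hmemU y hy
    have hlapv := hrlap y hyU
    obtain ⟨s, hsdef⟩ : ∃ s : ℝ, s = Qf y := ⟨_, rfl⟩
    obtain ⟨r, hrdef⟩ : ∃ r : ℝ, r = ‖y‖ := ⟨_, rfl⟩
    have hr0 : 0 ≤ r := by rw [hrdef]; exact norm_nonneg _
    have hrR : r ≤ R := by rw [hrdef]; exact le_trans hy hρR.le
    have hsr : s = r ^ 2 := by rw [hsdef, hrdef]; exact Qf_eq_norm_sq y
    have hs0 : 0 ≤ s := by rw [hsr]; exact sq_nonneg r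
    have hsR2 : s ≤ R ^ 2 := by rw [hsr]; exact pow_le_pow_left₀ hr0 hrR 2
    obtain ⟨X, hXdef⟩ : ∃ X : ℝ, X = R ^ 2 - s := ⟨_, rfl⟩
    have hX : 0 < X := by
      have h9 : Qf y < R ^ 2 := hyU
      rw [hXdef, hsdef]; linarith only [h9]
    have hXR : X ≤ R ^ 2 := by rw [hXdef]; linarith only [hs0]
    have hXsplit : X ^ (-q - 1) = X ^ (-q - 2) * X := by
      rw [show (-q - 1 : ℝ) = (-q - 2) + 1 by ring, Real.rpow_add_one (ne_of_gt hX)]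
    have h1r : (0:ℝ) < 1 + r := by linarith only [hr0]
    -- values of the profile
    have hg1s : g₁ s = A * q * X ^ (-q - 1) := by rw [hg₁def, hXdef]
    have hg2s : g₂ s = A * (q * (q + 1)) * X ^ (-q - 2) := by rw [hg₂def, hXdef]
    have hgs : g s = A * X ^ (-q) := by rw [hgdef, hXdef]
    -- core bound on the Laplacian
    have e1 : 4 * g₂ s * s + 2 * (d:ℝ) * g₁ s
        = A * X ^ (-q - 2) * (4 * (q * (q + 1)) * s + 2 * d * q * X) := by
      rw [hg1s, hg2s, hXsplit]
      ring
    have e2 : 4 * (q * (q + 1)) * s + 2 * (d:ℝ) * q * X ≤ Cq * R ^ 2 := by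
      have hq1 : (0:ℝ) ≤ q + 1 := by linarith only [hq]
      have t1 : 4 * (q * (q + 1)) * s ≤ 4 * (q * (q + 1)) * R ^ 2 :=
        mul_le_mul_of_nonneg_left hsR2
          (by exact mul_nonneg (by norm_num) (mul_nonneg hq.le hq1) : (0:ℝ) ≤ 4 * (q * (q + 1)))
      have t2 : 2 * (d:ℝ) * q * X ≤ 2 * (d:ℝ) * q * R ^ 2 :=
        mul_le_mul_of_nonneg_left hXR
          (by exact mul_nonneg (mul_nonneg (by norm_num) hd0) hq.le : (0:ℝ) ≤ 2 * (d:ℝ) * q)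
      rw [hCqdef]
      linarith only [t1, t2]
    have hAX : (0:ℝ) ≤ A * X ^ (-q - 2) :=
      (mul_pos hA (Real.rpow_pos_of_pos hX _)).le
    have e3 : 4 * g₂ s * s + 2 * (d:ℝ) * g₁ s ≤ A * X ^ (-q - 2) * (Cq * R ^ 2) := by
      rw [e1]
      exact mul_le_mul_of_nonneg_left e2 hAX
    -- value of v and its power
    have hvy : v y = A * X ^ (-q) := by
      show g (Qf y) = A * X ^ (-q)
      rw [← hsdef, hgs]
    have hvp : v y ^ p = A ^ p * X ^ (-q - 2) := by
      rw [hvy, Real.mul_rpow hA.le (Real.rpow_pos_of_pos hX _).le,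
        ← Real.rpow_mul hX.le]
      congr 1
      rw [show -q * p = -(q * p) by ring, hqp]
      ring_nf
    -- supersolution inequality
    have key : (1 + r) ^ m * (A * X ^ (-q - 2) * (Cq * R ^ 2))
        ≤ c * (1 + r) ^ (m - 2) * (A ^ p * X ^ (-q - 2)) := by
      have hsplit : (1 + r) ^ (m - 2) = (1 + r) ^ m * (1 + r) ^ (-2 : ℝ) := by
        rw [show m - 2 = m + (-2 : ℝ) by ring, Real.rpow_add h1r]
      have hneg2 : (1 + r) ^ (-2 : ℝ) = ((1 + r) ^ 2)⁻¹ := by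
        rw [Real.rpow_neg h1r.le, Real.rpow_two]
      have hbase : (1 + r) ^ 2 ≤ (1 + R) ^ 2 :=
        pow_le_pow_left₀ (by linarith only [hr0]) (by linarith only [hrR]) 2
      have h1R : (0:ℝ) < 1 + R := by linarith only [hRpos]
      have hcAp : c * A ^ p = Cq * R ^ 2 * (1 + R) ^ 2 * A := by
        rw [hAp]
        field_simp
      have hcore : A * (Cq * R ^ 2) ≤ c * A ^ p * ((1 + r) ^ 2)⁻¹ := by
        rw [hcAp, ← div_eq_mul_inv, le_div_iff₀ (pow_pos h1r 2)]
        have h6 : Cq * R ^ 2 * A * (1 + r) ^ 2 ≤ Cq * R ^ 2 * A * (1 + R) ^ 2 :=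
          mul_le_mul_of_nonneg_left hbase
            (mul_pos (mul_pos hCq hRsqpos) hA).le
        calc A * (Cq * R ^ 2) * (1 + r) ^ 2 = Cq * R ^ 2 * A * (1 + r) ^ 2 := by ring
          _ ≤ Cq * R ^ 2 * A * (1 + R) ^ 2 := h6
          _ = Cq * R ^ 2 * (1 + R) ^ 2 * A := by ring
      have hmX : (0:ℝ) ≤ (1 + r) ^ m * X ^ (-q - 2) :=
        (mul_pos (Real.rpow_pos_of_pos h1r m) (Real.rpow_pos_of_pos hX _)).le
      calc (1 + r) ^ m * (A * X ^ (-q - 2) * (Cq * R ^ 2))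
          = (1 + r) ^ m * X ^ (-q - 2) * (A * (Cq * R ^ 2)) := by ring
        _ ≤ (1 + r) ^ m * X ^ (-q - 2) * (c * A ^ p * ((1 + r) ^ 2)⁻¹) :=
            mul_le_mul_of_nonneg_left hcore hmX
        _ = c * ((1 + r) ^ m * (1 + r) ^ (-2:ℝ)) * (A ^ p * X ^ (-q - 2)) := by
            rw [hneg2]; ring
        _ = c * (1 + r) ^ (m - 2) * (A ^ p * X ^ (-q - 2)) := by rw [← hsplit]
    have hαv : c * (1 + r) ^ (m - 2) * (A ^ p * X ^ (-q - 2)) ≤ α y * v y ^ p := by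
      rw [← hvp, hrdef]
      apply mul_le_mul_of_nonneg_right (hα_lower y)
      rw [hvp]
      exact (mul_pos (Real.rpow_pos_of_pos hA p) (Real.rpow_pos_of_pos hX _)).le
    have hry : (1 + ‖y‖) = 1 + r := by rw [hrdef]
    calc (1 + ‖y‖) ^ m * (∑ i, pd i (pd i v) y)
        = (1 + r) ^ m * (4 * g₂ s * s + 2 * (d:ℝ) * g₁ s) := by
          rw [hlapv, hry, hsdef]
      _ ≤ (1 + r) ^ m * (A * X ^ (-q - 2) * (Cq * R ^ 2)) :=
          mul_le_mul_of_nonneg_left e3 (Real.rpow_pos_of_pos h1r m).le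
      _ ≤ c * (1 + r) ^ (m - 2) * (A ^ p * X ^ (-q - 2)) := key
      _ ≤ α y * v y ^ p := hαv
  -- boundary strict inequality
  have hbdry : ∀ y : EuclideanSpace ℝ (Fin d), ‖y‖ = ρ → ∀ s ∈ Icc (0:ℝ) ts,
      u y s < v y := by
    intro y hy s hs
    have h1 : u y s ≤ M₀ := hM₀b y (by rw [hy]; exact hρR.le) s hs
    have h2 : Qf y = ρ ^ 2 := by rw [Qf_eq_norm_sq, hy]
    have hvy : v y = A * tt ^ (-q) := by
      show g (Qf y) = A * tt ^ (-q)
      rw [hgdef, h2, hρsq]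
      ring_nf
    have htqpos : 0 < tt ^ q := Real.rpow_pos_of_pos htt_pos _
    have h3 : M₁ ≤ A * tt ^ (-q) := by
      have htq : tt ^ q ≤ A / M₁ := by
        have h5 := Real.rpow_le_rpow htt_pos.le htt2 hq.le
        rwa [← Real.rpow_mul (div_pos hA hM₁pos).le, one_div,
          inv_mul_cancel₀ (ne_of_gt hq), Real.rpow_one] at h5
      have h4 : M₁ * tt ^ q ≤ A := by
        rw [div_eq_mul_inv] at htq
        calc M₁ * tt ^ q ≤ M₁ * (A * M₁⁻¹) :=
              mul_le_mul_of_nonneg_left htq hM₁pos.le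
          _ = A := by field_simp
      rw [Real.rpow_neg htt_pos.le, ← div_eq_mul_inv, le_div_iff₀ htqpos]
      exact h4
    calc u y s ≤ M₀ := h1
      _ < M₁ := hM₀M₁
      _ ≤ A * tt ^ (-q) := h3
      _ = v y := hvy.symm
  -- apply the comparison principle
  have hcomp := comparison p m hp0 α hα_pos u hu_cont hu_x hu_t hpde hinit ts ρ hT hρpos
    v U hUopen hUb hv0 (fun y hy => hrd y hy) (fun i y hy => hrpd i y hy)
    (fun y hy => hv_super y hy) hbdry
  have hfin := hcomp xs hxsρ.le ts ⟨hT.le, le_refl ts⟩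
  -- final numeric bound
  have hXs34 : 3 * R ^ 2 / 4 ≤ R ^ 2 - ‖xs‖ ^ 2 := by linarith only [hxs_sq]
  have hXs34pos : (0:ℝ) < 3 * R ^ 2 / 4 := by linarith only [hRsqpos]
  have hvxs : v xs = A * (R ^ 2 - ‖xs‖ ^ 2) ^ (-q) := by
    show g (Qf xs) = _
    rw [hgdef, Qf_eq_norm_sq]
  have hmono : (R ^ 2 - ‖xs‖ ^ 2) ^ (-q) ≤ (3 * R ^ 2 / 4) ^ (-q) :=
    Real.rpow_le_rpow_of_nonpos hXs34pos hXs34 (by linarith only [hq])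
  have h1R : (0:ℝ) < 1 + R := by linarith only [hRpos]
  have hR1R : (0:ℝ) < R * (1 + R) := mul_pos hRpos h1R
  have hAeq : A = (Cq / c) ^ (1 / (p - 1)) * (R * (1 + R)) ^ q := by
    have h1 : Cq * R ^ 2 * (1 + R) ^ 2 / c = (Cq / c) * (R * (1 + R)) ^ 2 := by ring
    rw [hAdef, h1, Real.mul_rpow (div_pos hCq hc).le (sq_nonneg _)]
    congr 1
    rw [← Real.rpow_natCast (R * (1 + R)) 2, ← Real.rpow_mul hR1R.le]
    congr 1
    rw [hqdef]
    push_cast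
    ring
  have hfinal : A * (3 * R ^ 2 / 4) ^ (-q) ≤ (Cq / c) ^ (1 / (p - 1)) * 2 ^ q := by
    rw [hAeq]
    have h2 : (R * (1 + R)) ^ q * (3 * R ^ 2 / 4) ^ (-q)
        = ((R * (1 + R)) / (3 * R ^ 2 / 4)) ^ q := by
      rw [Real.div_rpow hR1R.le hXs34pos.le, Real.rpow_neg hXs34pos.le]
      exact (div_eq_mul_inv _ _).symm
    have h3 : (R * (1 + R)) / (3 * R ^ 2 / 4) = 4 * (1 + R) / (3 * R) := by
      rw [div_eq_div_iff (by linarith only [hXs34pos]) (by linarith only [hRpos])]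
      ring
    have h4 : 4 * (1 + R) / (3 * R) ≤ 2 := by
      rw [div_le_iff₀ (by linarith only [hRpos])]
      linarith only [hR2]
    have h5 : ((R * (1 + R)) / (3 * R ^ 2 / 4)) ^ q ≤ 2 ^ q := by
      apply Real.rpow_le_rpow (by rw [h3]; positivity) (by rw [h3]; exact h4) hq.le
    calc (Cq / c) ^ (1 / (p - 1)) * (R * (1 + R)) ^ q * (3 * R ^ 2 / 4) ^ (-q)
        = (Cq / c) ^ (1 / (p - 1)) * ((R * (1 + R)) ^ q * (3 * R ^ 2 / 4) ^ (-q)) := by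
          ring
      _ = (Cq / c) ^ (1 / (p - 1)) * ((R * (1 + R)) / (3 * R ^ 2 / 4)) ^ q := by rw [h2]
      _ ≤ (Cq / c) ^ (1 / (p - 1)) * 2 ^ q :=
          mul_le_mul_of_nonneg_left h5 (Real.rpow_pos_of_pos (div_pos hCq hc) _).le
  calc u xs ts ≤ v xs := hfin
    _ = A * (R ^ 2 - ‖xs‖ ^ 2) ^ (-q) := hvxs
    _ ≤ A * (3 * R ^ 2 / 4) ^ (-q) := mul_le_mul_of_nonneg_left hmono hA.le
    _ ≤ (Cq / c) ^ (1 / (p - 1)) * 2 ^ q := hfinal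

set_option maxHeartbeats 1000000 in
theorem stmt_11' {d : ℕ} (hd : 1 ≤ d) (p : ℝ) (hp1 : 1 < p) (hp2 : p ≤ 2)
    (m : ℝ)
    (α : EuclideanSpace ℝ (Fin d) → ℝ)
    (c : ℝ) (hc : 0 < c)
    (hα_lower : ∀ x, c * (1 + ‖x‖) ^ (m - 2) ≤ α x)
    (u : EuclideanSpace ℝ (Fin d) → ℝ → ℝ)
    (hu_cont : ContinuousOn (fun q : EuclideanSpace ℝ (Fin d) × ℝ => u q.1 q.2)
      (univ ×ˢ Ici (0 : ℝ)))
    (hu_nonneg : ∀ x t, 0 ≤ t → 0 ≤ u x t)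
    (hu_x : ∀ t : ℝ, 0 < t → ContDiff ℝ 2 (fun x => u x t))
    (hu_t : ∀ x, ContDiffOn ℝ 1 (fun s => u x s) (Ioi (0 : ℝ)))
    (hpde : ∀ x t, 0 < t →
      deriv (fun s => u x s) t =
        (1 + ‖x‖) ^ m * (∑ i, pd i (pd i (fun y => u y t)) x)
          - α x * u x t ^ p)
    (hinit : ∀ x, u x 0 = 0) :
    ∀ x t, 0 ≤ t → u x t = 0 := by
  have hp0 : (0:ℝ) < p := lt_trans one_pos hp1
  have hpm1 : (0:ℝ) < p - 1 := by linarith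
  have hα_pos : ∀ x, 0 < α x := fun x =>
    lt_of_lt_of_le (mul_pos hc (Real.rpow_pos_of_pos (by positivity) _)) (hα_lower x)
  have hd0 : (0:ℝ) < (d:ℝ) := by exact_mod_cast hd
  obtain ⟨M, hMpos, hMb⟩ := step1 p hp1 m α c hc hα_lower u hu_cont hu_x hu_t hpde hinit
  -- key estimate: for every ε > 0, u x t ≤ ε * (1 + ‖x‖^2)
  have hkey : ∀ ε : ℝ, 0 < ε → ∀ x t, 0 ≤ t → u x t ≤ ε * (1 + ‖x‖ ^ 2) := by
    intro ε hε x t ht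
    rcases eq_or_lt_of_le ht with h0 | hT
    · rw [← h0, hinit]
      positivity
    obtain ⟨σ, hσdef⟩ : ∃ σ : ℝ, σ = min 1 (c * ε ^ (p - 1) / (4 * d)) := ⟨_, rfl⟩
    have hεp1 : (0:ℝ) < ε ^ (p - 1) := Real.rpow_pos_of_pos hε _
    have hσpos : 0 < σ := by
      rw [hσdef]
      apply lt_min one_pos
      exact div_pos (mul_pos hc hεp1) (by linarith only [hd0])
    have hσ1 : σ ≤ 1 := by rw [hσdef]; exact min_le_left _ _
    have hσc : 4 * (d:ℝ) * σ ≤ c * ε ^ (p - 1) := by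
      have h1 : σ ≤ c * ε ^ (p - 1) / (4 * d) := by rw [hσdef]; exact min_le_right _ _
      have h2 : (0:ℝ) < 4 * (d:ℝ) := by linarith only [hd0]
      calc 4 * (d:ℝ) * σ ≤ 4 * (d:ℝ) * (c * ε ^ (p - 1) / (4 * d)) :=
            mul_le_mul_of_nonneg_left h1 h2.le
        _ = c * ε ^ (p - 1) := by field_simp
    -- barrier profile
    set g : ℝ → ℝ := fun s => ε * (1 + s) ^ σ with hgdef
    set g₁ : ℝ → ℝ := fun s => ε * σ * (1 + s) ^ (σ - 1) with hg₁def
    set g₂ : ℝ → ℝ := fun s => ε * (σ * (σ - 1)) * (1 + s) ^ (σ - 2) with hg₂def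
    have hg : ∀ s ∈ Ioi (-1 : ℝ), HasDerivAt g (g₁ s) s := by
      intro s hs
      have hs1 : (0:ℝ) < 1 + s := by
        have : -1 < s := hs
        linarith only [this]
      have h1 : HasDerivAt (fun s : ℝ => 1 + s) 1 s := by
        simpa using (hasDerivAt_id s).const_add (1:ℝ)
      have h2 : HasDerivAt (fun y : ℝ => y ^ σ) (σ * (1 + s) ^ (σ - 1)) (1 + s) :=
        Real.hasDerivAt_rpow_const (Or.inl (ne_of_gt hs1))
      have h3 := (h2.comp s h1).const_mul ε
      convert h3 using 1
      show ε * σ * (1 + s) ^ (σ - 1) = _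
      ring
      all_goals rfl
    have hg₁ : ∀ s ∈ Ioi (-1 : ℝ), HasDerivAt g₁ (g₂ s) s := by
      intro s hs
      have hs1 : (0:ℝ) < 1 + s := by
        have : -1 < s := hs
        linarith only [this]
      have h1 : HasDerivAt (fun s : ℝ => 1 + s) 1 s := by
        simpa using (hasDerivAt_id s).const_add (1:ℝ)
      have h2 : HasDerivAt (fun y : ℝ => y ^ (σ - 1)) ((σ - 1) * (1 + s) ^ (σ - 1 - 1))
          (1 + s) := Real.hasDerivAt_rpow_const (Or.inl (ne_of_gt hs1))
      have h3 := (h2.comp s h1).const_mul (ε * σ)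
      convert h3 using 1
      show ε * (σ * (σ - 1)) * (1 + s) ^ (σ - 2) = _
      have h4 : σ - 1 - 1 = σ - 2 := by ring
      rw [h4]
      ring
      all_goals rfl
    obtain ⟨hrd, hrpd, hrlap⟩ := radial_facts g g₁ g₂ (Ioi (-1 : ℝ)) isOpen_Ioi hg hg₁
    set v : EuclideanSpace ℝ (Fin d) → ℝ := fun y => g (Qf y) with hvdef
    set U : Set (EuclideanSpace ℝ (Fin d)) := Qf ⁻¹' (Ioi (-1 : ℝ)) with hUdef
    have hUopen : IsOpen U := isOpen_Ioi.preimage continuous_Qf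
    have hallU : ∀ y : EuclideanSpace ℝ (Fin d), y ∈ U := by
      intro y
      have h1 : (0:ℝ) ≤ Qf y := Qf_nonneg y
      show Qf y ∈ Ioi (-1 : ℝ)
      simp only [mem_Ioi]
      linarith only [h1]
    -- choice of the radius
    obtain ⟨ρ, hρdef⟩ :
        ∃ ρ : ℝ, ρ = max (‖x‖ + 1) (Real.sqrt (((M + 1) / ε) ^ (1 / σ))) := ⟨_, rfl⟩
    have hρx : ‖x‖ + 1 ≤ ρ := by rw [hρdef]; exact le_max_left _ _
    have hρpos : 0 < ρ := lt_of_lt_of_le (by positivity) hρx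
    have hxρ : ‖x‖ ≤ ρ := by linarith only [hρx]
    have hρ2 : ((M + 1) / ε) ^ (1 / σ) ≤ ρ ^ 2 := by
      have h1 : Real.sqrt (((M + 1) / ε) ^ (1 / σ)) ≤ ρ := by
        rw [hρdef]; exact le_max_right _ _
      have h2 : (0:ℝ) ≤ ((M + 1) / ε) ^ (1 / σ) :=
        (Real.rpow_pos_of_pos (div_pos (by linarith only [hMpos]) hε) _).le
      calc ((M + 1) / ε) ^ (1 / σ) = Real.sqrt (((M + 1) / ε) ^ (1 / σ)) ^ 2 :=
            (Real.sq_sqrt h2).symm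
        _ ≤ ρ ^ 2 := pow_le_pow_left₀ (Real.sqrt_nonneg _) h1 2
    -- boundary values dominate M
    have hsphere : ∀ y : EuclideanSpace ℝ (Fin d), ‖y‖ = ρ → M + 1 ≤ v y := by
      intro y hy
      have hQy : Qf y = ρ ^ 2 := by rw [Qf_eq_norm_sq, hy]
      have hb1 : ((M + 1) / ε) ^ (1 / σ) ≤ 1 + Qf y := by
        rw [hQy]
        linarith only [hρ2]
      have hMε : (0:ℝ) < (M + 1) / ε := div_pos (by linarith only [hMpos]) hε
      have hb2 : (((M + 1) / ε) ^ (1 / σ)) ^ σ ≤ (1 + Qf y) ^ σ :=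
        Real.rpow_le_rpow (Real.rpow_pos_of_pos hMε _).le hb1 hσpos.le
      have hb3 : (((M + 1) / ε) ^ (1 / σ)) ^ σ = (M + 1) / ε := by
        rw [← Real.rpow_mul hMε.le, one_div, inv_mul_cancel₀ (ne_of_gt hσpos),
          Real.rpow_one]
      have hb4 : (M + 1) / ε ≤ (1 + Qf y) ^ σ := by rw [← hb3]; exact hb2
      have : ε * ((M + 1) / ε) ≤ ε * (1 + Qf y) ^ σ :=
        mul_le_mul_of_nonneg_left hb4 hε.le
      calc M + 1 = ε * ((M + 1) / ε) := by field_simp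
        _ ≤ ε * (1 + Qf y) ^ σ := this
        _ = v y := rfl
    have hv0 : ∀ y ∈ U, 0 ≤ v y := by
      intro y _
      have h1 : (0:ℝ) ≤ Qf y := Qf_nonneg y
      have h2 : (0:ℝ) < 1 + Qf y := by linarith only [h1]
      exact (mul_pos hε (Real.rpow_pos_of_pos h2 _)).le
    -- supersolution property
    have hv_super : ∀ y : EuclideanSpace ℝ (Fin d), ‖y‖ ≤ ρ →
        (1 + ‖y‖) ^ m * (∑ i, pd i (pd i v) y) ≤ α y * v y ^ p := by
      intro y _
      have hlapv := hrlap y (hallU y)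
      obtain ⟨s, hsdef⟩ : ∃ s : ℝ, s = Qf y := ⟨_, rfl⟩
      obtain ⟨r, hrdef⟩ : ∃ r : ℝ, r = ‖y‖ := ⟨_, rfl⟩
      have hr0 : 0 ≤ r := by rw [hrdef]; exact norm_nonneg _
      have hsr : s = r ^ 2 := by rw [hsdef, hrdef]; exact Qf_eq_norm_sq y
      have hs0 : 0 ≤ s := by rw [hsr]; exact sq_nonneg r
      have hs1 : (0:ℝ) < 1 + s := by linarith only [hs0]
      have h1r : (0:ℝ) < 1 + r := by linarith only [hr0]
      have hg1s : g₁ s = ε * σ * (1 + s) ^ (σ - 1) := rfl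
      have hg2s : g₂ s = ε * (σ * (σ - 1)) * (1 + s) ^ (σ - 2) := rfl
      -- the second-order term is nonpositive
      have hneg : 4 * g₂ s * s ≤ 0 := by
        rw [hg2s]
        have h1 : σ * (σ - 1) ≤ 0 :=
          mul_nonpos_of_nonneg_of_nonpos hσpos.le (by linarith only [hσ1])
        have h2 : ε * (σ * (σ - 1)) ≤ 0 :=
          mul_nonpos_of_nonneg_of_nonpos hε.le h1
        have h3 : ε * (σ * (σ - 1)) * (1 + s) ^ (σ - 2) ≤ 0 :=
          mul_nonpos_of_nonpos_of_nonneg h2 (Real.rpow_pos_of_pos hs1 _).le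
        have h4 : 4 * (ε * (σ * (σ - 1)) * (1 + s) ^ (σ - 2)) * s ≤ 0 :=
          mul_nonpos_of_nonpos_of_nonneg (by linarith only [h3]) hs0
        linarith only [h4]
      -- pointwise bound for the first-order term
      have hsplit : (1 + s) ^ (σ - 1) = (1 + s) ^ σ * (1 + s)⁻¹ := by
        rw [show σ - 1 = σ + (-1 : ℝ) by ring, Real.rpow_add hs1,
          Real.rpow_neg_one]
      have hinv : (1 + s)⁻¹ ≤ 2 * ((1 + r) ^ 2)⁻¹ := by
        have h1 : (1 + r) ^ 2 ≤ 2 * (1 + s) := by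
          rw [hsr]
          nlinarith only [sq_nonneg (1 - r)]
        have h2 : (0:ℝ) < (1 + r) ^ 2 := pow_pos h1r 2
        have h3 : 1 / (1 + s) ≤ 2 / ((1 + r) ^ 2) := by
          rw [div_le_div_iff₀ hs1 h2]
          linarith only [h1]
        calc (1 + s)⁻¹ = 1 / (1 + s) := (one_div _).symm
          _ ≤ 2 / ((1 + r) ^ 2) := h3
          _ = 2 * ((1 + r) ^ 2)⁻¹ := by rw [div_eq_mul_inv]
      -- rpow bookkeeping
      have h1rm : (0:ℝ) < (1 + r) ^ m := Real.rpow_pos_of_pos h1r m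
      have h1sσ : (0:ℝ) < (1 + s) ^ σ := Real.rpow_pos_of_pos hs1 σ
      have hneg2 : (1 + r) ^ (m - 2) = (1 + r) ^ m * ((1 + r) ^ 2)⁻¹ := by
        rw [show m - 2 = m + (-2 : ℝ) by ring, Real.rpow_add h1r,
          Real.rpow_neg h1r.le, Real.rpow_two]
      have hεp : ε ^ (p - 1) * ε = ε ^ p := by
        rw [← Real.rpow_add_one (ne_of_gt hε)]
        norm_num
      have hvyp : v y ^ p = ε ^ p * (1 + s) ^ (σ * p) := by
        have hvy : v y = ε * (1 + s) ^ σ := by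
          show ε * (1 + Qf y) ^ σ = ε * (1 + s) ^ σ
          rw [hsdef]
        rw [hvy, Real.mul_rpow hε.le h1sσ.le, ← Real.rpow_mul hs1.le]
      have hσσp : (1 + s) ^ σ ≤ (1 + s) ^ (σ * p) := by
        apply Real.rpow_le_rpow_of_exponent_le (by linarith only [hs0])
        calc σ = σ * 1 := by ring
          _ ≤ σ * p := mul_le_mul_of_nonneg_left hp1.le hσpos.le
      -- the main chain
      have hry : (1 + ‖y‖) = 1 + r := by rw [hrdef]
      have step_a : (1 + ‖y‖) ^ m * (∑ i, pd i (pd i v) y)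
          ≤ (1 + r) ^ m * (2 * (d:ℝ) * (ε * σ * (1 + s) ^ (σ - 1))) := by
        rw [hlapv, hry, hsdef]
        apply mul_le_mul_of_nonneg_left _ h1rm.le
        rw [← hsdef, hg1s] at *
        linarith only [hneg]
      have step_b : (1 + r) ^ m * (2 * (d:ℝ) * (ε * σ * (1 + s) ^ (σ - 1)))
          ≤ (2 * (d:ℝ) * ε * σ * (1 + s) ^ σ) * ((1 + r) ^ m * (2 * ((1 + r) ^ 2)⁻¹)) := by
        rw [hsplit]
        have h5 : (0:ℝ) ≤ 2 * (d:ℝ) * ε * σ * (1 + s) ^ σ * (1 + r) ^ m := by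
          have := hd0.le
          positivity
        calc (1 + r) ^ m * (2 * (d:ℝ) * (ε * σ * ((1 + s) ^ σ * (1 + s)⁻¹)))
            = (2 * (d:ℝ) * ε * σ * (1 + s) ^ σ * (1 + r) ^ m) * (1 + s)⁻¹ := by ring
          _ ≤ (2 * (d:ℝ) * ε * σ * (1 + s) ^ σ * (1 + r) ^ m) * (2 * ((1 + r) ^ 2)⁻¹) :=
              mul_le_mul_of_nonneg_left hinv h5
          _ = (2 * (d:ℝ) * ε * σ * (1 + s) ^ σ) * ((1 + r) ^ m * (2 * ((1 + r) ^ 2)⁻¹)) := by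
              ring
      have step_c : (2 * (d:ℝ) * ε * σ * (1 + s) ^ σ) * ((1 + r) ^ m * (2 * ((1 + r) ^ 2)⁻¹))
          ≤ c * (1 + r) ^ (m - 2) * (ε ^ p * (1 + s) ^ σ) := by
        have h6 : (0:ℝ) ≤ (1 + s) ^ σ * ((1 + r) ^ m * ((1 + r) ^ 2)⁻¹) := by positivity
        have h7 : 4 * (d:ℝ) * σ * ε ≤ c * ε ^ (p - 1) * ε :=
          mul_le_mul_of_nonneg_right hσc hε.le
        have h8 : 4 * (d:ℝ) * σ * ε ≤ c * ε ^ p := by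
          rw [← hεp]; linarith only [h7]
        calc (2 * (d:ℝ) * ε * σ * (1 + s) ^ σ) * ((1 + r) ^ m * (2 * ((1 + r) ^ 2)⁻¹))
            = (4 * (d:ℝ) * σ * ε) * ((1 + s) ^ σ * ((1 + r) ^ m * ((1 + r) ^ 2)⁻¹)) := by
              ring
          _ ≤ (c * ε ^ p) * ((1 + s) ^ σ * ((1 + r) ^ m * ((1 + r) ^ 2)⁻¹)) :=
              mul_le_mul_of_nonneg_right h8 h6
          _ = c * (1 + r) ^ (m - 2) * (ε ^ p * (1 + s) ^ σ) := by
              rw [hneg2]; ring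
      have step_d : c * (1 + r) ^ (m - 2) * (ε ^ p * (1 + s) ^ σ)
          ≤ c * (1 + r) ^ (m - 2) * (ε ^ p * (1 + s) ^ (σ * p)) := by
        apply mul_le_mul_of_nonneg_left
        · exact mul_le_mul_of_nonneg_left hσσp (Real.rpow_pos_of_pos hε _).le
        · exact (mul_pos hc (Real.rpow_pos_of_pos h1r _)).le
      have step_e : c * (1 + r) ^ (m - 2) * (ε ^ p * (1 + s) ^ (σ * p))
          ≤ α y * v y ^ p := by
        rw [← hvyp, hrdef]
        apply mul_le_mul_of_nonneg_right (hα_lower y)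
        rw [hvyp]
        exact (mul_pos (Real.rpow_pos_of_pos hε _) (Real.rpow_pos_of_pos hs1 _)).le
      calc (1 + ‖y‖) ^ m * (∑ i, pd i (pd i v) y)
          ≤ (1 + r) ^ m * (2 * (d:ℝ) * (ε * σ * (1 + s) ^ (σ - 1))) := step_a
        _ ≤ (2 * (d:ℝ) * ε * σ * (1 + s) ^ σ) * ((1 + r) ^ m * (2 * ((1 + r) ^ 2)⁻¹)) :=
            step_b
        _ ≤ c * (1 + r) ^ (m - 2) * (ε ^ p * (1 + s) ^ σ) := step_c
        _ ≤ c * (1 + r) ^ (m - 2) * (ε ^ p * (1 + s) ^ (σ * p)) := step_d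
        _ ≤ α y * v y ^ p := step_e
    -- boundary strict inequality
    have hUb : Metric.closedBall (0 : EuclideanSpace ℝ (Fin d)) ρ ⊆ U :=
      fun y _ => hallU y
    have hbdry : ∀ y : EuclideanSpace ℝ (Fin d), ‖y‖ = ρ → ∀ τ ∈ Icc (0:ℝ) t,
        u y τ < v y := by
      intro y hy τ hτ
      calc u y τ ≤ M := hMb y τ hτ.1
        _ < M + 1 := by linarith only []
        _ ≤ v y := hsphere y hy
    have hcomp := comparison p m hp0 α hα_pos u hu_cont hu_x hu_t hpde hinit t ρ hT hρpos
      v U hUopen hUb hv0 (fun y hy => hrd y hy) (fun i y hy => hrpd i y hy)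
      (fun y hy => hv_super y hy) hbdry
    have hfin := hcomp x hxρ t ⟨hT.le, le_refl t⟩
    have hvx : v x = ε * (1 + ‖x‖ ^ 2) ^ σ := by
      show ε * (1 + Qf x) ^ σ = _
      rw [Qf_eq_norm_sq]
    have hlast : ε * (1 + ‖x‖ ^ 2) ^ σ ≤ ε * (1 + ‖x‖ ^ 2) := by
      apply mul_le_mul_of_nonneg_left _ hε.le
      have h1 : (1:ℝ) ≤ 1 + ‖x‖ ^ 2 := by
        have := sq_nonneg ‖x‖
        linarith only [this]
      calc (1 + ‖x‖ ^ 2) ^ σ ≤ (1 + ‖x‖ ^ 2) ^ (1:ℝ) :=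
            Real.rpow_le_rpow_of_exponent_le h1 hσ1
        _ = 1 + ‖x‖ ^ 2 := Real.rpow_one _
    calc u x t ≤ v x := hfin
      _ = ε * (1 + ‖x‖ ^ 2) ^ σ := hvx
      _ ≤ ε * (1 + ‖x‖ ^ 2) := hlast
  -- conclusion
  intro x t ht
  refine le_antisymm ?_ (hu_nonneg x t ht)
  by_contra hpos
  push_neg at hpos
  have hx2 : (0:ℝ) < 1 + ‖x‖ ^ 2 := by positivity
  have hε : (0:ℝ) < u x t / (2 * (1 + ‖x‖ ^ 2)) := by positivity
  have := hkey _ hε x t ht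
  have heq : u x t / (2 * (1 + ‖x‖ ^ 2)) * (1 + ‖x‖ ^ 2) = u x t / 2 := by
    field_simp
  rw [heq] at this
  linarith only [this, hpos]

/-- Proposition 1: for `L = (1+|x|)^m Δ` and
`α(x) ≥ c(1+|x|)^{m−2}`, the only nonnegative classical solution of
`u_t = (1+|x|)^m Δu − αu^p` with zero initial data is `u ≡ 0`. -/
theorem stmt_11 {d : ℕ} (hd : 1 ≤ d) (p : ℝ) (hp1 : 1 < p) (hp2 : p ≤ 2)
    (m : ℝ)
    (α : EuclideanSpace ℝ (Fin d) → ℝ) (hα_holder : LocHolder α)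
    (c : ℝ) (hc : 0 < c)
    (hα_lower : ∀ x, c * (1 + ‖x‖) ^ (m - 2) ≤ α x)
    (u : EuclideanSpace ℝ (Fin d) → ℝ → ℝ)
    (hu_cont : ContinuousOn (fun q : EuclideanSpace ℝ (Fin d) × ℝ => u q.1 q.2)
      (univ ×ˢ Ici (0 : ℝ)))
    (hu_nonneg : ∀ x t, 0 ≤ t → 0 ≤ u x t)
    (hu_x : ∀ t : ℝ, 0 < t → ContDiff ℝ 2 (fun x => u x t))
    (hu_t : ∀ x, ContDiffOn ℝ 1 (fun s => u x s) (Ioi (0 : ℝ)))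
    (hpde : ∀ x t, 0 < t →
      deriv (fun s => u x s) t =
        (1 + ‖x‖) ^ m * (∑ i, pd i (pd i (fun y => u y t)) x)
          - α x * u x t ^ p)
    (hinit : ∀ x, u x 0 = 0) :
    ∀ x t, 0 ≤ t → u x t = 0 :=
  stmt_11' hd p hp1 hp2 m α c hc hα_lower u hu_cont hu_nonneg hu_x hu_t hpde hinit
end

section
/- Let d ≥ 1, p > 1, and c > 0. Then the only nonnegative, twice continuously differentiable function W : ℝ^d → ℝ satisfying ΔW(x) = c(1+|x|)^{−2} W(x)^p for all x ∈ ℝ^d is W ≡ 0. -/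
open Set

open Filter Topology

section Aux

variable {d : ℕ}

/-- 1D second derivative test: at an interior local max, the second derivative is `≤ 0`. -/
lemma second_deriv_test {h h' : ℝ → ℝ} {U : Set ℝ} (hU : IsOpen U) (h0U : (0:ℝ) ∈ U)
    (hd : ∀ t ∈ U, HasDerivAt h (h' t) t) {c0 : ℝ} (hd2 : HasDerivAt h' c0 0)
    (hmax : IsLocalMax h 0) : c0 ≤ 0 := by
  by_contra hpos
  push_neg at hpos
  have h'0 : h' 0 = 0 := by
    have := (hd 0 h0U).deriv
    rw [← this]; exact hmax.deriv_eq_zero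
  have hslope : Tendsto (slope h' 0) (𝓝[≠] (0:ℝ)) (𝓝 c0) :=
    hasDerivAt_iff_tendsto_slope.mp hd2
  have h'pos : ∀ᶠ t in 𝓝[≠] (0:ℝ), 0 < slope h' 0 t :=
    hslope.eventually (eventually_gt_nhds hpos)
  have hA : ∀ᶠ t in 𝓝 (0:ℝ), t ∈ U ∧ h t ≤ h 0 :=
    (hU.eventually_mem h0U).and hmax
  have hB : ∀ᶠ t in 𝓝[≠] (0:ℝ), (t ∈ U ∧ h t ≤ h 0) ∧ 0 < slope h' 0 t :=
    (hA.filter_mono nhdsWithin_le_nhds).and h'pos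
  obtain ⟨ε, hε, hball⟩ := Metric.mem_nhdsWithin_iff.mp hB
  set t₁ : ℝ := ε / 2 with ht₁
  have ht₁pos : 0 < t₁ := by positivity
  have hmem : ∀ t : ℝ, 0 < t → t ≤ t₁ → (t ∈ U ∧ h t ≤ h 0) ∧ 0 < h' t := by
    intro t ht ht'
    have htb : t ∈ Metric.ball (0:ℝ) ε ∩ {(0:ℝ)}ᶜ := by
      constructor
      · simp only [Metric.mem_ball, dist_zero_right, Real.norm_eq_abs]
        rw [abs_of_pos ht]; linarith
      · simp [ne_of_gt ht]
    have := hball htb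
    refine ⟨this.1, ?_⟩
    have hs := this.2
    rw [slope_def_field, h'0] at hs
    have : 0 < (h' t - 0) / (t - 0) := hs
    have := mul_pos this (show (0:ℝ) < t - 0 by simpa using ht)
    rw [div_mul_cancel₀] at this
    · simpa using this
    · simpa using ne_of_gt ht
  have hcont : ContinuousOn h (Icc 0 t₁) := by
    intro t ht
    rcases eq_or_lt_of_le ht.1 with h0 | hlt
    · subst h0
      exact (hd 0 h0U).continuousAt.continuousWithinAt
    · exact ((hd t ((hmem t hlt ht.2).1.1)).continuousAt).continuousWithinAt
  have hmono : StrictMonoOn h (Icc 0 t₁) := by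
    apply strictMonoOn_of_deriv_pos (convex_Icc _ _) hcont
    intro t ht
    rw [interior_Icc] at ht
    have := hmem t ht.1 ht.2.le
    rw [(hd t this.1.1).deriv]
    exact this.2
  have h1 : h 0 < h t₁ := hmono ⟨le_refl 0, ht₁pos.le⟩ ⟨ht₁pos.le, le_refl _⟩ ht₁pos
  have h2 : h t₁ ≤ h 0 := (hmem t₁ ht₁pos (le_refl _)).1.2
  linarith

lemma poly_hasDerivAt (aa bb gg t : ℝ) :
    HasDerivAt (fun t : ℝ => aa + bb*t + gg*t^2) (bb + 2*gg*t) t := by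
  have h1 : HasDerivAt (fun t : ℝ => aa + bb*t) bb t := by
    simpa using ((hasDerivAt_id t).const_mul bb).const_add aa
  have h2 : HasDerivAt (fun t : ℝ => gg*t^2) (gg*(2*t)) t := by
    simpa using ((hasDerivAt_pow 2 t)).const_mul gg
  exact (h1.add h2).congr_deriv (by ring)

lemma bar_deriv1 {aa bb gg m t : ℝ} (h : aa + bb*t + gg*t^2 ≠ 0) (A : ℝ) :
    HasDerivAt (fun t : ℝ => A * (aa+bb*t+gg*t^2)^m)
      (A * (m * (aa+bb*t+gg*t^2)^(m-1) * (bb+2*gg*t))) t := by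
  have := ((poly_hasDerivAt aa bb gg t).rpow_const (p := m) (Or.inl h)).const_mul A
  exact this.congr_deriv (by ring)

lemma bar_deriv2 {aa bb gg m A : ℝ} (ha : aa ≠ 0) :
    HasDerivAt (fun t : ℝ => A * (m * (aa+bb*t+gg*t^2)^(m-1) * (bb+2*gg*t)))
      (A * m * ((m-1)*aa^(m-2)*bb*bb + aa^(m-1)*(2*gg))) 0 := by
  have hP0 : aa + bb*0 + gg*0^2 = aa := by ring
  have hf1 : HasDerivAt (fun t : ℝ => (aa+bb*t+gg*t^2)^(m-1))
      ((m-1) * aa^(m-1-1) * (bb+2*gg*0)) 0 := by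
    have h0 := (poly_hasDerivAt aa bb gg 0).rpow_const (p := m-1) (Or.inl (by rw [hP0]; exact ha))
    convert h0 using 1
    rw [hP0]; simp; ring
  have hf2 : HasDerivAt (fun t : ℝ => bb + 2*gg*t) (2*gg) 0 := by
    simpa using ((hasDerivAt_id (0:ℝ)).const_mul (2*gg)).const_add bb
  have h2 := (hf1.mul hf2).const_mul (A * m)
  have hfun : (fun t : ℝ => A * m * ((aa+bb*t+gg*t^2)^(m-1) * (bb+2*gg*t)))
      = (fun t : ℝ => A * (m * (aa+bb*t+gg*t^2)^(m-1) * (bb+2*gg*t))) := by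
    funext t; ring
  rw [← hfun]
  refine h2.congr_deriv ?_
  rw [hP0, show m-1-1 = m-2 by ring]
  ring

lemma line_hasDerivAt (x v : EuclideanSpace ℝ (Fin d)) (t : ℝ) :
    HasDerivAt (fun τ : ℝ => x + τ • v) v t := by
  simpa using ((hasDerivAt_id t).smul_const v).const_add x

lemma W_line_deriv {W : EuclideanSpace ℝ (Fin d) → ℝ} (hW : ContDiff ℝ 2 W) (i : Fin d)
    (x : EuclideanSpace ℝ (Fin d)) (t : ℝ) :
    HasDerivAt (fun τ : ℝ => W (x + τ • EuclideanSpace.single i (1:ℝ)))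
      (pd i W (x + t • EuclideanSpace.single i (1:ℝ))) t := by
  have hdiff : DifferentiableAt ℝ W (x + t • EuclideanSpace.single i (1:ℝ)) :=
    (hW.differentiable (by norm_num)).differentiableAt
  exact hdiff.hasFDerivAt.comp_hasDerivAt t (line_hasDerivAt x _ t)

lemma pdW_diff {W : EuclideanSpace ℝ (Fin d) → ℝ} (hW : ContDiff ℝ 2 W) (i : Fin d)
    (x : EuclideanSpace ℝ (Fin d)) : DifferentiableAt ℝ (pd i W) x := by
  have h1 : ContDiff ℝ 1 (fderiv ℝ W) := hW.fderiv_right (by norm_num)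
  have h2 : DifferentiableAt ℝ (fderiv ℝ W) x := (h1.differentiable one_ne_zero).differentiableAt
  exact h2.clm_apply (differentiableAt_const _)

lemma pdW_line_deriv {W : EuclideanSpace ℝ (Fin d) → ℝ} (hW : ContDiff ℝ 2 W) (i : Fin d)
    (x : EuclideanSpace ℝ (Fin d)) :
    HasDerivAt (fun τ : ℝ => pd i W (x + τ • EuclideanSpace.single i (1:ℝ)))
      (pd i (pd i W) x) 0 := by
  have hx : x = x + (0:ℝ) • EuclideanSpace.single i (1:ℝ) := by simp
  have hD : DifferentiableAt ℝ (pd i W) (x + (0:ℝ) • EuclideanSpace.single i (1:ℝ)) := by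
    rw [← hx]; exact pdW_diff hW i x
  have := (hD.hasFDerivAt).comp_hasDerivAt 0 (line_hasDerivAt x (EuclideanSpace.single i (1:ℝ)) 0)
  rw [← hx] at this
  exact this

lemma sum_sq_eq_normsq (x : EuclideanSpace ℝ (Fin d)) : ∑ i, (x i)^2 = ‖x‖^2 := by
  rw [EuclideanSpace.norm_eq, Real.sq_sqrt]
  · simp [sq_abs]
  · positivity

lemma norm_line_sq (x : EuclideanSpace ℝ (Fin d)) (i : Fin d) (t : ℝ) :
    ‖x + t • EuclideanSpace.single i (1:ℝ)‖^2 = ‖x‖^2 + 2*(x i)*t + 1*t^2 := by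
  rw [norm_add_sq_real]
  rw [real_inner_smul_right]
  rw [EuclideanSpace.inner_single_right]
  simp [norm_smul]
  ring

/-- Kernel: at a local max of `W - φ` with `φ = A(β+γ‖·‖²)^m`, the Laplacian of `W`
is bounded by the formal Laplacian of `φ`. -/
lemma kernel_ineq {W : EuclideanSpace ℝ (Fin d) → ℝ} (hW : ContDiff ℝ 2 W)
    {A β γ m : ℝ} {x : EuclideanSpace ℝ (Fin d)}
    (ha : 0 < β + γ*‖x‖^2)
    (hmax : IsLocalMax (fun y => W y - A*(β+γ*‖y‖^2)^m) x) :
    ∑ i, pd i (pd i W) x ≤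
      A*m*(m-1)*(β+γ*‖x‖^2)^(m-2)*4*γ^2*‖x‖^2 + A*m*(β+γ*‖x‖^2)^(m-1)*(2*γ)*d := by
  set a : ℝ := β + γ*‖x‖^2 with hadef
  have key : ∀ i : Fin d, pd i (pd i W) x ≤
      A*m*((m-1)*a^(m-2)*(2*γ*(x i))*(2*γ*(x i)) + a^(m-1)*(2*γ)) := by
    intro i
    set e : EuclideanSpace ℝ (Fin d) := EuclideanSpace.single i (1:ℝ) with hedef
    set bb : ℝ := 2*γ*(x i) with hbbdef
    have hbase : ∀ t : ℝ, β + γ*‖x + t • e‖^2 = a + bb*t + γ*t^2 := by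
      intro t; rw [hedef, norm_line_sq]; ring
    set U : Set ℝ := {t : ℝ | 0 < a + bb*t + γ*t^2} with hUdef
    have hUopen : IsOpen U :=
      isOpen_lt continuous_const (by continuity)
    have h0U : (0:ℝ) ∈ U := by
      simp only [hUdef, mem_setOf_eq]
      convert ha using 1
      ring
    set h : ℝ → ℝ := fun t => W (x + t • e) - A*(a+bb*t+γ*t^2)^m with hhdef
    have hmax0 : IsLocalMax h 0 := by
      have hcont : Continuous (fun t : ℝ => x + t • e) := by continuity
      have htend : Tendsto (fun t : ℝ => x + t • e) (𝓝 0) (𝓝 x) := by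
        have := hcont.tendsto 0
        simpa using this
      have hev := htend.eventually hmax
      filter_upwards [hev] with t ht
      show h t ≤ h 0
      simp only [hhdef]
      have l : a+bb*t+γ*t^2 = β+γ*‖x+t•e‖^2 := (hbase t).symm
      have r : a+bb*(0:ℝ)+γ*(0:ℝ)^2 = β+γ*‖x‖^2 := by rw [hadef]; ring
      rw [l, r, show x + (0:ℝ)•e = x by simp]
      exact ht
    set h' : ℝ → ℝ := fun t =>
      pd i W (x + t • e) - A*(m*(a+bb*t+γ*t^2)^(m-1)*(bb+2*γ*t)) with hh'def
    have hd : ∀ t ∈ U, HasDerivAt h (h' t) t := by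
      intro t ht
      exact (W_line_deriv hW i x t).sub (bar_deriv1 (ne_of_gt ht) A)
    have hd2 : HasDerivAt h'
        (pd i (pd i W) x - A*m*((m-1)*a^(m-2)*bb*bb + a^(m-1)*(2*γ))) 0 :=
      (pdW_line_deriv hW i x).sub (bar_deriv2 (ne_of_gt ha))
    have := second_deriv_test hUopen h0U hd hd2 hmax0
    linarith
  calc ∑ i, pd i (pd i W) x
      ≤ ∑ i : Fin d, A*m*((m-1)*a^(m-2)*(2*γ*(x i))*(2*γ*(x i)) + a^(m-1)*(2*γ)) :=
        Finset.sum_le_sum (fun i _ => key i)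
    _ = (A*m*(m-1)*a^(m-2)*4*γ^2) * (∑ i, (x i)^2) + (Fintype.card (Fin d)) *
          (A*m*a^(m-1)*(2*γ)) := by
        rw [Finset.sum_congr rfl (fun i _ => show _ =
          (A*m*(m-1)*a^(m-2)*4*γ^2)*(x i)^2 + A*m*a^(m-1)*(2*γ) by ring)]
        rw [Finset.sum_add_distrib, ← Finset.mul_sum, Finset.sum_const, Finset.card_univ]
        push_cast; ring
    _ = _ := by rw [sum_sq_eq_normsq]; simp; ring

/-- Comparison principle on a ball, abstract version. -/
lemma comp_ball {W φ : EuclideanSpace ℝ (Fin d) → ℝ} (hWc : Continuous W) {ρ' ρ : ℝ}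
    (hρ'0 : 0 ≤ ρ') (hρ : ρ' < ρ)
    (hφc : ContinuousOn φ (Metric.ball 0 ρ))
    (hshell : ∀ x : EuclideanSpace ℝ (Fin d), ρ' ≤ ‖x‖ → ‖x‖ < ρ → W x < φ x)
    (hker : ∀ x : EuclideanSpace ℝ (Fin d), ‖x‖ < ρ →
      IsLocalMax (fun y => W y - φ y) x → W x ≤ φ x) :
    ∀ y : EuclideanSpace ℝ (Fin d), ‖y‖ < ρ' → W y ≤ φ y := by
  set ρ'' : ℝ := (ρ' + ρ)/2 with hρ''def
  have hρ''1 : ρ' < ρ'' := by rw [hρ''def]; linarith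
  have hρ''2 : ρ'' < ρ := by rw [hρ''def]; linarith
  have hρ''0 : 0 < ρ'' := by linarith
  set K : Set (EuclideanSpace ℝ (Fin d)) := Metric.closedBall 0 ρ'' with hKdef
  have hKcomp : IsCompact K := isCompact_closedBall _ _
  have hKne : K.Nonempty := ⟨0, by simp [hKdef]; linarith⟩
  have hKball : K ⊆ Metric.ball 0 ρ := by
    intro x hx
    simp only [hKdef, Metric.mem_closedBall, dist_zero_right] at hx
    simp only [Metric.mem_ball, dist_zero_right]
    linarith
  have hgc : ContinuousOn (fun y => W y - φ y) K :=
    (hWc.continuousOn).sub (hφc.mono hKball)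
  obtain ⟨xm, hxmK, hxmax⟩ := hKcomp.exists_isMaxOn hKne hgc
  have hxm_norm : ‖xm‖ ≤ ρ'' := by
    simpa [hKdef, dist_zero_right] using hxmK
  by_cases hcase : W xm ≤ φ xm
  · intro y hy
    have hyK : y ∈ K := by
      simp only [hKdef, Metric.mem_closedBall, dist_zero_right]; linarith
    have := hxmax hyK
    simp only [mem_setOf_eq] at this
    linarith
  · push_neg at hcase
    exfalso
    have hxm_lt : ‖xm‖ < ρ' := by
      by_contra hge
      push_neg at hge
      exact absurd (hshell xm hge (lt_of_le_of_lt hxm_norm hρ''2)) (not_lt.mpr hcase.le)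
    have hKnhds : K ∈ 𝓝 xm := by
      rw [mem_nhds_iff]
      refine ⟨Metric.ball 0 ρ'', Metric.ball_subset_closedBall, Metric.isOpen_ball, ?_⟩
      simp only [Metric.mem_ball, dist_zero_right]
      linarith
    have hloc : IsLocalMax (fun y => W y - φ y) xm := hxmax.isLocalMax hKnhds
    exact absurd (hker xm (lt_trans (lt_of_lt_of_le hxm_lt hρ''1.le) hρ''2) hloc)
      (not_le.mpr hcase)

/-- Continuity of the barrier on the region where its base is positive. -/
lemma barrier_contOn {A β γ m ρ : ℝ}
    (h : ∀ x : EuclideanSpace ℝ (Fin d), ‖x‖ < ρ → 0 < β + γ*‖x‖^2) :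
    ContinuousOn (fun y : EuclideanSpace ℝ (Fin d) => A*(β+γ*‖y‖^2)^m)
      (Metric.ball 0 ρ) := by
  intro x hx
  simp only [Metric.mem_ball, dist_zero_right] at hx
  have hbase : ContinuousAt (fun y : EuclideanSpace ℝ (Fin d) => β+γ*‖y‖^2) x := by
    fun_prop
  have hrpow : ContinuousAt (fun y : EuclideanSpace ℝ (Fin d) => (β+γ*‖y‖^2)^m) x :=
    ContinuousAt.comp (x := x) (g := fun u : ℝ => u ^ m)
      (Real.continuousAt_rpow_const _ m (Or.inl (ne_of_gt (h x hx)))) hbase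
  exact (continuousAt_const.mul hrpow).continuousWithinAt

/-- Supersolution inequality for the slowly-growing barrier `A(1+r²)^s`. -/
lemma super2 {p c s A : ℝ} {d : ℕ} (hd : 1 ≤ d) (hp : 1 < p) (hc : 0 < c)
    (hs : 0 < s) (hs1 : s ≤ 1) (hAdef : A = (4*s*d/c)^(1/(p-1))) {r : ℝ} (hr : 0 ≤ r) :
    A*s*(s-1)*(1+r^2)^(s-2)*4*1^2*r^2 + A*s*(1+r^2)^(s-1)*(2*1)*d
      ≤ c*(1+r)^(-2:ℝ)*(A*(1+r^2)^s)^p := by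
  have hd' : (1:ℝ) ≤ d := by exact_mod_cast hd
  have hX : (0:ℝ) < 4*s*d/c := by positivity
  have hA : 0 < A := hAdef ▸ Real.rpow_pos_of_pos hX _
  have ha0 : (0:ℝ) < 1+r^2 := by positivity
  have ha1 : (1:ℝ) ≤ 1+r^2 := by nlinarith
  have hp1 : (0:ℝ) < p - 1 := by linarith
  have hApow : A^(p-1) = 4*s*d/c := by
    rw [hAdef, ← Real.rpow_mul hX.le, one_div, inv_mul_cancel₀ (ne_of_gt hp1), Real.rpow_one]
  have hAp : A^p = (4*s*d/c) * A := by
    rw [show p = (p-1)+1 by ring, Real.rpow_add hA, hApow, Real.rpow_one]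
  have t1 : A*s*(s-1)*(1+r^2)^(s-2)*4*1^2*r^2 ≤ 0 := by
    have h2 : 0 ≤ A*s*(1+r^2)^(s-2)*4*r^2 := by positivity
    nlinarith [mul_nonneg h2 (show (0:ℝ) ≤ 1 - s by linarith)]
  have hsplit : ((1+r)^(-2:ℝ)) = ((1+r)^2)⁻¹ := by
    rw [show (-2:ℝ) = -(2:ℕ) by norm_num, Real.rpow_neg (by linarith), Real.rpow_natCast]
  have h2a : ((1:ℝ)+r)^2 ≤ 2*(1+r^2) := by nlinarith [sq_nonneg (1-r)]
  have hV : (2*(1+r^2))⁻¹ ≤ (1+r)^(-2:ℝ) := by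
    rw [hsplit]
    exact inv_anti₀ (by positivity) h2a
  have hABpow : (A*(1+r^2)^s)^p = A^p * (1+r^2)^(s*p) := by
    rw [Real.mul_rpow hA.le (Real.rpow_nonneg ha0.le _), ← Real.rpow_mul ha0.le]
  have hexp : (1+r^2)^(s-1) ≤ (1+r^2)^(s*p-1) := by
    apply Real.rpow_le_rpow_of_exponent_le ha1
    nlinarith
  have hrw : c*(2*(1+r^2))⁻¹*(A^p * (1+r^2)^(s*p)) = 2*s*d*A*(1+r^2)^(s*p-1) := by
    rw [hAp, show s*p-1 = s*p + (-1) by ring, Real.rpow_add ha0, Real.rpow_neg_one]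
    field_simp
    ring
  have key : 2*s*d*A*(1+r^2)^(s-1) ≤ c*(1+r)^(-2:ℝ)*((A*(1+r^2)^s)^p) := by
    calc 2*s*d*A*(1+r^2)^(s-1) ≤ 2*s*d*A*(1+r^2)^(s*p-1) := by
          apply mul_le_mul_of_nonneg_left hexp (by positivity)
      _ = c*(2*(1+r^2))⁻¹*(A^p * (1+r^2)^(s*p)) := hrw.symm
      _ ≤ c*(1+r)^(-2:ℝ)*(A^p * (1+r^2)^(s*p)) := by
          apply mul_le_mul_of_nonneg_right (mul_le_mul_of_nonneg_left hV hc.le)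
          positivity
      _ = c*(1+r)^(-2:ℝ)*((A*(1+r^2)^s)^p) := by rw [hABpow]
  calc A*s*(s-1)*(1+r^2)^(s-2)*4*1^2*r^2 + A*s*(1+r^2)^(s-1)*(2*1)*d
      ≤ A*s*(1+r^2)^(s-1)*(2*1)*d := by linarith
    _ = 2*s*d*A*(1+r^2)^(s-1) := by ring
    _ ≤ c*(1+r)^(-2:ℝ)*((A*(1+r^2)^s)^p) := key

/-- Supersolution inequality for the Osserman barrier `A(R²−r²)^{−μ}` on the ball of radius `R`. -/
lemma super1 {p c μ B A R r : ℝ} {d : ℕ} (hd : 1 ≤ d) (hp : 1 < p) (hc : 0 < c)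
    (hμdef : μ = 2/(p-1)) (hBdef : B = 4*μ*(μ+1)+2*μ*d) (hAdef : A = (4*B*R^4/c)^(1/(p-1)))
    (hR : 1 ≤ R) (hr : 0 ≤ r) (hrR : r < R) :
    A*(-μ)*(-μ-1)*(R^2-r^2)^(-μ-2)*4*(-1:ℝ)^2*r^2 + A*(-μ)*(R^2-r^2)^(-μ-1)*(2*(-1:ℝ))*d
      ≤ c*(1+r)^(-2:ℝ)*(A*(R^2-r^2)^(-μ))^p := by
  have hd' : (1:ℝ) ≤ d := by exact_mod_cast hd
  have hp1 : (0:ℝ) < p - 1 := by linarith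
  have hμ : 0 < μ := by rw [hμdef]; positivity
  have hB : 0 < B := by rw [hBdef]; positivity
  have hR0 : (0:ℝ) < R := by linarith
  have hX : (0:ℝ) < 4*B*R^4/c := by positivity
  have hA : 0 < A := hAdef ▸ Real.rpow_pos_of_pos hX _
  have ha0 : (0:ℝ) < R^2-r^2 := by nlinarith
  set a : ℝ := R^2-r^2 with hadef
  have haR : a ≤ R^2 := by rw [hadef]; nlinarith
  have hApow : A^(p-1) = 4*B*R^4/c := by
    rw [hAdef, ← Real.rpow_mul hX.le, one_div, inv_mul_cancel₀ (ne_of_gt hp1), Real.rpow_one]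
  have hAp : A^p = (4*B*R^4/c) * A := by
    rw [show p = (p-1)+1 by ring, Real.rpow_add hA, hApow, Real.rpow_one]
  have hsplit : a^(-μ-1) = a^(-μ-2) * a := by
    rw [show -μ-1 = (-μ-2)+1 by ring, Real.rpow_add ha0, Real.rpow_one]
  have hposm2 : 0 < a^(-μ-2) := Real.rpow_pos_of_pos ha0 _
  have hLHS : A*(-μ)*(-μ-1)*a^(-μ-2)*4*(-1:ℝ)^2*r^2 + A*(-μ)*a^(-μ-1)*(2*(-1:ℝ))*d
      ≤ A*B*R^2*a^(-μ-2) := by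
    rw [hsplit]
    have e2 : 4*μ*(μ+1)*r^2 + 2*μ*(d:ℝ)*a ≤ B*R^2 := by
      rw [hBdef]
      have k1 : 4*μ*(μ+1)*r^2 ≤ 4*μ*(μ+1)*R^2 :=
        mul_le_mul_of_nonneg_left (by nlinarith) (by positivity)
      have k2 : 2*μ*(d:ℝ)*a ≤ 2*μ*(d:ℝ)*R^2 :=
        mul_le_mul_of_nonneg_left haR (by positivity)
      linarith
    calc A*(-μ)*(-μ-1)*a^(-μ-2)*4*(-1:ℝ)^2*r^2 + A*(-μ)*(a^(-μ-2)*a)*(2*(-1:ℝ))*d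
        = (A*a^(-μ-2)) * (4*μ*(μ+1)*r^2 + 2*μ*d*a) := by ring
      _ ≤ (A*a^(-μ-2)) * (B*R^2) := by
          apply mul_le_mul_of_nonneg_left e2 (by positivity)
      _ = A*B*R^2*a^(-μ-2) := by ring
  have hsplitV : ((1+r)^(-2:ℝ)) = ((1+r)^2)⁻¹ := by
    rw [show (-2:ℝ) = -(2:ℕ) by norm_num, Real.rpow_neg (by linarith), Real.rpow_natCast]
  have h2a : ((1:ℝ)+r)^2 ≤ 4*R^2 := by nlinarith
  have hV : (4*R^2)⁻¹ ≤ (1+r)^(-2:ℝ) := by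
    rw [hsplitV]
    exact inv_anti₀ (by positivity) h2a
  have hμp : -μ*p = -μ-2 := by
    rw [hμdef]; field_simp; ring
  have hABpow : (A*a^(-μ))^p = A^p * a^(-μ-2) := by
    rw [Real.mul_rpow hA.le (Real.rpow_nonneg ha0.le _), ← Real.rpow_mul ha0.le, hμp]
  have hrw : c*(4*R^2)⁻¹*(A^p * a^(-μ-2)) = A*B*R^2*a^(-μ-2) := by
    rw [hAp]
    field_simp
  have key : A*B*R^2*a^(-μ-2) ≤ c*(1+r)^(-2:ℝ)*((A*a^(-μ))^p) := by
    calc A*B*R^2*a^(-μ-2) = c*(4*R^2)⁻¹*(A^p * a^(-μ-2)) := hrw.symm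
      _ ≤ c*(1+r)^(-2:ℝ)*(A^p * a^(-μ-2)) := by
          apply mul_le_mul_of_nonneg_right (mul_le_mul_of_nonneg_left hV hc.le)
          positivity
      _ = c*(1+r)^(-2:ℝ)*((A*a^(-μ))^p) := by rw [hABpow]
  exact le_trans hLHS key

end Aux

set_option maxHeartbeats 2000000 in
/-- the only nonnegative `C²` solution of
`ΔW = c(1+|x|)^{−2} W^p` on `ℝ^d` is `W ≡ 0`. -/
theorem stmt_13 {d : ℕ} (hd : 1 ≤ d) (p : ℝ) (hp : 1 < p) (c : ℝ) (hc : 0 < c)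
    (W : EuclideanSpace ℝ (Fin d) → ℝ)
    (hW_smooth : ContDiff ℝ 2 W)
    (hW_nonneg : ∀ x, 0 ≤ W x)
    (hW_eq : ∀ x, (∑ i, pd i (pd i W) x) = c * (1 + ‖x‖) ^ (-2 : ℝ) * W x ^ p) :
    ∀ x, W x = 0 := by
  have hWc : Continuous W := hW_smooth.continuous
  have hp1 : (0:ℝ) < p-1 := by linarith
  have hd' : (1:ℝ) ≤ d := by exact_mod_cast hd
  set μ : ℝ := 2/(p-1) with hμdef
  have hμ : 0 < μ := by rw [hμdef]; positivity
  set B : ℝ := 4*μ*(μ+1)+2*μ*d with hBdef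
  have hB : 0 < B := by rw [hBdef]; positivity
  set K : ℝ := (16*B/c)^(1/(p-1)) with hKdef
  have hK : 0 < K := Real.rpow_pos_of_pos (by positivity) _
  -- generic kernel step
  have hker_gen : ∀ (A β γ m : ℝ) (x : EuclideanSpace ℝ (Fin d)),
      0 < β + γ*‖x‖^2 →
      (A*m*(m-1)*(β+γ*‖x‖^2)^(m-2)*4*γ^2*‖x‖^2 + A*m*(β+γ*‖x‖^2)^(m-1)*(2*γ)*d
        ≤ c*(1+‖x‖)^(-2:ℝ)*(A*(β+γ*‖x‖^2)^m)^p) →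
      0 ≤ A*(β+γ*‖x‖^2)^m →
      IsLocalMax (fun y => W y - A*(β+γ*‖y‖^2)^m) x → W x ≤ A*(β+γ*‖x‖^2)^m := by
    intro A β γ m x ha hsuper hφ0 hmax
    have h1 := kernel_ineq hW_smooth ha hmax
    rw [hW_eq x] at h1
    have h2 : c*(1+‖x‖)^(-2:ℝ)*(W x)^p ≤ c*(1+‖x‖)^(-2:ℝ)*(A*(β+γ*‖x‖^2)^m)^p :=
      le_trans h1 hsuper
    have hpos : 0 < c*(1+‖x‖)^(-2:ℝ) := by positivity
    have h3 : (W x)^p ≤ (A*(β+γ*‖x‖^2)^m)^p := le_of_mul_le_mul_left h2 hpos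
    by_contra hlt
    push_neg at hlt
    have := Real.rpow_lt_rpow hφ0 hlt (by linarith : (0:ℝ) < p)
    linarith
  -- Part 1: the global bound `W ≤ K`
  have hbound : ∀ z, W z ≤ K := by
    intro z
    set R : ℝ := 2*‖z‖+2 with hRdef
    have hz0 := norm_nonneg z
    have hR1 : (1:ℝ) ≤ R := by rw [hRdef]; linarith
    have hR0 : (0:ℝ) < R := by linarith
    set A : ℝ := (4*B*R^4/c)^(1/(p-1)) with hAdef
    have hA : 0 < A := Real.rpow_pos_of_pos (by positivity) _
    obtain ⟨xM, hxMmem, hxMmax⟩ :=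
      (isCompact_closedBall (0:EuclideanSpace ℝ (Fin d)) R).exists_isMaxOn
        ⟨0, by simp [hR0.le]⟩ hWc.continuousOn
    set M : ℝ := W xM with hMdef
    have hM0 : 0 ≤ M := le_trans (hW_nonneg 0) (hxMmax (by simp [hR0.le]))
    have hMb : ∀ x : EuclideanSpace ℝ (Fin d), ‖x‖ ≤ R → W x ≤ M := by
      intro x hx
      exact hxMmax (by simpa [Metric.mem_closedBall, dist_zero_right] using hx)
    set δ : ℝ := min ((A/(M+A))^((p-1)/2)) (R^2/2) with hδdef
    have hδ0 : 0 < δ :=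
      lt_min (Real.rpow_pos_of_pos (by positivity) _) (by positivity)
    have hδR : δ ≤ R^2/2 := min_le_right _ _
    have hδpow : ∀ t : ℝ, 0 < t → t ≤ δ → M < A*t^(-μ) := by
      intro t ht htδ
      set d1 : ℝ := (A/(M+A))^((p-1)/2) with hd1def
      have hd1pos : 0 < A/(M+A) := by positivity
      have htd1 : t ≤ d1 := le_trans htδ (min_le_left _ _)
      have h1 : d1^(-μ) ≤ t^(-μ) :=
        Real.rpow_le_rpow_of_nonpos ht htd1 (by linarith : -μ ≤ 0)
      have h2 : d1^(-μ) = (M+A)/A := by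
        rw [hd1def, ← Real.rpow_mul hd1pos.le,
          show ((p-1)/2)*(-μ) = -1 by rw [hμdef]; field_simp,
          Real.rpow_neg_one, inv_div]
      have h3 : A * ((M+A)/A) ≤ A * t^(-μ) :=
        mul_le_mul_of_nonneg_left (h2 ▸ h1) hA.le
      have hAeq : A*((M+A)/A) = M+A := by field_simp
      linarith
    set ρ' : ℝ := Real.sqrt (R^2 - δ) with hρ'def
    have hρ'sq : ρ'^2 = R^2 - δ := Real.sq_sqrt (by nlinarith)
    have hρ'0 : 0 ≤ ρ' := Real.sqrt_nonneg _
    have hρ'R : ρ' < R := by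
      rw [hρ'def]
      calc Real.sqrt (R^2-δ) < Real.sqrt (R^2) :=
            Real.sqrt_lt_sqrt (by nlinarith) (by linarith)
        _ = R := Real.sqrt_sq hR0.le
    have hcomp := comp_ball (W := W) (φ := fun y => A*(R^2+(-1)*‖y‖^2)^(-μ))
      hWc hρ'0 hρ'R ?hcont ?hshell ?hker
    case hcont =>
      apply barrier_contOn
      intro x hx
      have := norm_nonneg x
      nlinarith
    case hshell =>
      intro x hx1 hx2
      have hxR : ‖x‖ ≤ R := hx2.le
      have ht0 : 0 < R^2 - ‖x‖^2 := by nlinarith [norm_nonneg x]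
      have htδ : R^2 - ‖x‖^2 ≤ δ := by
        have hsq : ρ'^2 ≤ ‖x‖^2 := by nlinarith [norm_nonneg x]
        nlinarith
      have hlt := hδpow _ ht0 htδ
      have hWxM := hMb x hxR
      calc W x ≤ M := hWxM
        _ < A*(R^2-‖x‖^2)^(-μ) := hlt
        _ = A*(R^2+(-1)*‖x‖^2)^(-μ) := by
            rw [show R^2 + (-1)*‖x‖^2 = R^2 - ‖x‖^2 from by ring]
    case hker =>
      intro x hx hmax
      have ha : 0 < R^2 + (-1)*‖x‖^2 := by nlinarith [norm_nonneg x]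
      apply hker_gen A (R^2) (-1) (-μ) x ha ?_ (by positivity) hmax
      have hs := super1 (d := d) hd hp hc hμdef hBdef hAdef hR1 (norm_nonneg x) hx
      rw [show R^2 + (-1)*‖x‖^2 = R^2 - ‖x‖^2 by ring]
      exact hs
    have hzρ' : ‖z‖ < ρ' := by
      rw [hρ'def, Real.lt_sqrt (norm_nonneg z)]
      have : δ ≤ R^2/2 := hδR
      nlinarith
    have hz := hcomp z hzρ'
    -- now `W z ≤ A (R²-‖z‖²)^{-μ} ≤ A (R²/2)^{-μ} = K`
    have hzsq : R^2/2 ≤ R^2 + (-1)*‖z‖^2 := by nlinarith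
    have hanti : (R^2+(-1)*‖z‖^2)^(-μ) ≤ (R^2/2)^(-μ) :=
      Real.rpow_le_rpow_of_nonpos (by positivity) hzsq (by linarith)
    have hKeq : A*(R^2/2)^(-μ) = K := by
      have hhalf : (0:ℝ) < R^2/2 := by positivity
      have e1 : (R^2/2)^(-μ) = ((R^2/2)^(-2:ℝ))^(1/(p-1)) := by
        rw [← Real.rpow_mul hhalf.le, show (-2:ℝ)*(1/(p-1)) = -μ by rw [hμdef]; ring]
      have e2 : (R^2/2)^(-2:ℝ) = ((R^2/2)^2)⁻¹ := by
        rw [show (-2:ℝ) = -(2:ℕ) by norm_num, Real.rpow_neg hhalf.le, Real.rpow_natCast]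
      rw [hAdef, e1, e2, ← Real.mul_rpow (by positivity) (by positivity)]
      rw [hKdef]
      congr 1
      field_simp
      ring
    calc W z ≤ A*(R^2+(-1)*‖z‖^2)^(-μ) := hz
      _ ≤ A*(R^2/2)^(-μ) := mul_le_mul_of_nonneg_left hanti hA.le
      _ = K := hKeq
  -- Part 2: comparison with the slowly growing barrier, and conclusion
  intro y
  refine le_antisymm ?_ (hW_nonneg y)
  by_contra hpos0
  push_neg at hpos0
  set X : ℝ := W y / (2*(1+‖y‖^2)) with hXdef
  have hX0 : 0 < X := by
    rw [hXdef]
    have := norm_nonneg y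
    positivity
  set s : ℝ := min 1 (c/(4*d) * X^(p-1)) with hsdef
  have hs0 : 0 < s := lt_min one_pos (by positivity)
  have hs1 : s ≤ 1 := min_le_left _ _
  set ε : ℝ := (4*s*d/c)^(1/(p-1)) with hεdef
  have hε : 0 < ε := Real.rpow_pos_of_pos (by positivity) _
  set D : ℝ := ((K+ε)/ε)^(1/s) with hDdef
  have hD0 : 0 < D := Real.rpow_pos_of_pos (by positivity) _
  set ρ' : ℝ := max (Real.sqrt D) (‖y‖+1) with hρ'def
  have hρ'0 : 0 ≤ ρ' := le_trans (Real.sqrt_nonneg D) (le_max_left _ _)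
  have hcomp := comp_ball (W := W) (φ := fun x => ε*(1+1*‖x‖^2)^s)
    hWc hρ'0 (lt_add_one ρ') ?hcont2 ?hshell2 ?hker2
  case hcont2 =>
    apply barrier_contOn
    intro x hx
    nlinarith [sq_nonneg ‖x‖]
  case hshell2 =>
    intro x hx1 hx2
    have hsqrtD : Real.sqrt D ≤ ‖x‖ := le_trans (le_max_left _ _) hx1
    have hDx : D ≤ ‖x‖^2 := by
      have h0 := Real.sqrt_nonneg D
      calc D = (Real.sqrt D)^2 := (Real.sq_sqrt hD0.le).symm
        _ ≤ ‖x‖^2 := by nlinarith [norm_nonneg x]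
    have h1 : (K+ε)/ε < (1+1*‖x‖^2)^s := by
      have hDs : D^s = (K+ε)/ε := by
        rw [hDdef, ← Real.rpow_mul (by positivity), one_div,
          inv_mul_cancel₀ (ne_of_gt hs0), Real.rpow_one]
      calc (K+ε)/ε = D^s := hDs.symm
        _ < (1+1*‖x‖^2)^s := Real.rpow_lt_rpow hD0.le (by nlinarith) hs0
    have h2 : K + ε < ε*(1+1*‖x‖^2)^s := by
      have h3 := mul_lt_mul_of_pos_left h1 hε
      have h4 : ε*((K+ε)/ε) = K+ε := by field_simp
      linarith [h4 ▸ h3]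
    calc W x ≤ K := hbound x
      _ < ε*(1+1*‖x‖^2)^s := by linarith
  case hker2 =>
    intro x hx hmax
    have ha : 0 < 1 + 1*‖x‖^2 := by nlinarith [sq_nonneg ‖x‖]
    apply hker_gen ε 1 1 s x ha ?_ (by positivity) hmax
    have hsup := super2 (d := d) hd hp hc hs0 hs1 hεdef (norm_nonneg x)
    rw [show (1:ℝ) + 1*‖x‖^2 = 1 + ‖x‖^2 by ring]
    exact hsup
  have hy' : ‖y‖ < ρ' := lt_of_lt_of_le (lt_add_one ‖y‖) (le_max_right _ _)
  have hfin := hcomp y hy'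
  have hmono : (1+1*‖y‖^2)^s ≤ (1+‖y‖^2) := by
    rw [show (1:ℝ)+1*‖y‖^2 = 1+‖y‖^2 by ring]
    calc (1+‖y‖^2)^s ≤ (1+‖y‖^2)^(1:ℝ) :=
          Real.rpow_le_rpow_of_exponent_le (by nlinarith [sq_nonneg ‖y‖]) hs1
      _ = 1+‖y‖^2 := Real.rpow_one _
  have hεX : ε ≤ X := by
    have hsle : s ≤ c/(4*d) * X^(p-1) := min_le_right _ _
    have harg : 4*s*d/c ≤ X^(p-1) := by
      have h5 := mul_le_mul_of_nonneg_left hsle (show (0:ℝ) ≤ 4*d/c by positivity)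
      calc 4*s*d/c = (4*d/c)*s := by ring
        _ ≤ (4*d/c)*(c/(4*d)*X^(p-1)) := h5
        _ = X^(p-1) := by field_simp
    calc ε = (4*s*d/c)^(1/(p-1)) := hεdef
      _ ≤ (X^(p-1))^(1/(p-1)) := Real.rpow_le_rpow (by positivity) harg (by positivity)
      _ = X := by
          rw [← Real.rpow_mul hX0.le, mul_one_div, div_self (ne_of_gt hp1), Real.rpow_one]
  have hfin2 : W y ≤ X * (1+‖y‖^2) := by
    calc W y ≤ ε*(1+1*‖y‖^2)^s := hfin
      _ ≤ X * (1+‖y‖^2) :=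
          mul_le_mul hεX hmono (by positivity) hX0.le
  have hhalf : X*(1+‖y‖^2) = W y/2 := by
    rw [hXdef]
    have : (0:ℝ) < 1+‖y‖^2 := by nlinarith [sq_nonneg ‖y‖]
    field_simp
  rw [hhalf] at hfin2
  linarith
end
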